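/- arXiv:2504.09633 — 7 statements merged into one kernel-verified Lean document; each statement's English description precedes it below -/
import Mathlib

section
/- Let G be a rooted directed graph with root o having no finite strongly connected components. Then for all n ∈ ℕ, F_G(|B_G(o, n−1)|) ≥ n, where B_G(o, r) is the set of vertices at directed distance at most r from o. -/
open scoped ENNReal

/-- `reachIn E k a b`: there is a directed path of length `k` from `a` to `b`. -/
def reachIn {V : Type*} (E : V → V → Prop) : ℕ → V → V → Prop
  | 0, a, b => a = b
  | (n+1), a, b => ∃ c, E a c ∧ reachIn E n c b

/-- Directed graph distance, valued in `ℕ∞`. -/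
noncomputable def gdist {V : Type*} (E : V → V → Prop) (a b : V) : ℕ∞ :=
  sInf {n : ℕ∞ | ∃ k : ℕ, (k : ℕ∞) = n ∧ reachIn E k a b}

/-- The rooted ball spread `F_G(n) = min_v max_{w : dist(v,w) ≤ n} dist(o,w)`. -/
noncomputable def ballSpread {V : Type*} (E : V → V → Prop) (o : V) (n : ℕ) : ℕ∞ :=
  ⨅ v : V, ⨆ w ∈ {w | gdist E v w ≤ (n : ℕ∞)}, gdist E o w

/-- The strongly connected component of a vertex `v`. -/
def scc {V : Type*} (E : V → V → Prop) (v : V) : Set V :=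
  {w | Relation.ReflTransGen E v w ∧ Relation.ReflTransGen E w v}

lemma reachIn_snoc {V : Type*} {E : V → V → Prop} :
    ∀ {k : ℕ} {a b c : V}, reachIn E k a b → E b c → reachIn E (k+1) a c := by
  intro k
  induction k with
  | zero => intro a b c h h2; cases h; exact ⟨c, h2, rfl⟩
  | succ n ih =>
    intro a b c h h2
    obtain ⟨d, had, hdb⟩ := h
    exact ⟨d, had, ih hdb h2⟩

lemma gdist_le_natCast_iff {V : Type*} (E : V → V → Prop) (a b : V) (k : ℕ) :
    gdist E a b ≤ (k : ℕ∞) ↔ ∃ j ≤ k, reachIn E j a b := by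
  constructor
  · intro h
    rcases Set.eq_empty_or_nonempty
      {n : ℕ∞ | ∃ k : ℕ, (k : ℕ∞) = n ∧ reachIn E k a b} with he | hne
    · exfalso
      rw [gdist, he, sInf_empty] at h
      exact (ENat.coe_lt_top k).not_ge h
    · have hmem := csInf_mem hne
      obtain ⟨j, hj, hr⟩ := hmem
      refine ⟨j, ?_, hr⟩
      rw [← Nat.cast_le (α := ℕ∞), hj]
      exact le_trans (le_of_eq rfl) h
  · rintro ⟨j, hjk, hr⟩
    exact le_trans (sInf_le ⟨j, rfl, hr⟩) (by exact_mod_cast hjk)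

lemma gdist_self_le {V : Type*} (E : V → V → Prop) (a : V) (k : ℕ) :
    gdist E a a ≤ (k : ℕ∞) :=
  (gdist_le_natCast_iff E a a k).2 ⟨0, Nat.zero_le _, rfl⟩

lemma mem_closed_of_reflTransGen {V : Type*} {E : V → V → Prop} {S : Set V}
    (hc : ∀ a ∈ S, ∀ b, E a b → b ∈ S) {v w : V} (hv : v ∈ S)
    (h : Relation.ReflTransGen E v w) : w ∈ S := by
  induction h with
  | refl => exact hv
  | tail _ hbc ih => exact hc _ ih _ hbc

/-- If a rooted directed graph (with finite balls around the root) has no finite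
strongly connected components, then `F_G(|B_G(o, n−1)|) ≥ n` for all `n`. -/
theorem stmt2 {V : Type*} (E : V → V → Prop) (o : V)
    (hroot : ∀ v, Relation.ReflTransGen E o v)
    (hball : ∀ r : ℕ, {w : V | gdist E o w ≤ (r : ℕ∞)}.Finite)
    (hscc : ∀ v : V, ¬ (scc E v).Finite) :
    ∀ n : ℕ, (n : ℕ∞) ≤ ballSpread E o ({w : V | gdist E o w ≤ ((n - 1 : ℕ) : ℕ∞)}.ncard) := by
  intro n
  rcases Nat.eq_zero_or_pos n with hn0 | hn
  · simp [hn0]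
  set m : ℕ := {w : V | gdist E o w ≤ ((n - 1 : ℕ) : ℕ∞)}.ncard with hm
  rw [ballSpread, le_iInf_iff]
  intro v
  by_contra hlt
  push_neg at hlt
  -- every w within distance m of v has gdist o w ≤ n-1
  have hsub : ∀ w, gdist E v w ≤ (m : ℕ∞) → gdist E o w ≤ ((n - 1 : ℕ) : ℕ∞) := by
    intro w hw
    have : gdist E o w < (n : ℕ∞) := lt_of_le_of_lt (le_biSup _ hw) hlt
    have h1 : gdist E o w + 1 ≤ (n : ℕ∞) := Order.add_one_le_of_lt this
    have hcast : (n : ℕ∞) = ((n - 1 : ℕ) : ℕ∞) + 1 := by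
      rw [← Nat.cast_add_one, Nat.sub_add_cancel hn]
    exact (ENat.lt_add_one_iff (by simp)).1 (hcast ▸ this)
  -- balls around v
  set B : ℕ → Set V := fun k => {w : V | gdist E v w ≤ (k : ℕ∞)} with hB
  have hBsub : ∀ k ≤ m, B k ⊆ {w : V | gdist E o w ≤ ((n - 1 : ℕ) : ℕ∞)} := by
    intro k hk w hw
    exact hsub w (le_trans hw (by exact_mod_cast hk))
  have hBfin : ∀ k ≤ m, (B k).Finite := fun k hk =>
    ((hball (n-1)).subset (hBsub k hk))
  have hmono : ∀ k, B k ⊆ B (k+1) := by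
    intro k w hw
    simp only [hB, Set.mem_setOf_eq] at hw ⊢
    exact le_trans hw (by exact_mod_cast Nat.le_succ k)
  -- strictness: if B k = B (k+1) with k < m, the ball is closed, contradiction with scc
  have hstrict : ∀ k < m, B k ≠ B (k+1) := by
    intro k hk heq
    have hclosed : ∀ a ∈ B k, ∀ b, E a b → b ∈ B k := by
      intro a ha b hab
      rw [heq]
      obtain ⟨j, hjk, hr⟩ := (gdist_le_natCast_iff E v a k).1 ha
      exact (gdist_le_natCast_iff E v b (k+1)).2
        ⟨j+1, Nat.succ_le_succ hjk, reachIn_snoc hr hab⟩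
    have hvB : v ∈ B k := gdist_self_le E v k
    have hsccsub : scc E v ⊆ B k := fun w hw =>
      mem_closed_of_reflTransGen hclosed hvB hw.1
    exact hscc v (((hBfin k (le_of_lt hk)).subset) hsccsub)
  -- cardinality grows: k+1 ≤ ncard (B k) for k ≤ m
  have hcard : ∀ k ≤ m, k + 1 ≤ (B k).ncard := by
    intro k
    induction k with
    | zero =>
      intro _
      have hv0 : v ∈ B 0 := gdist_self_le E v 0
      exact (Set.ncard_pos (hBfin 0 (Nat.zero_le _))).2 ⟨v, hv0⟩
    | succ k ih =>
      intro hk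
      have hk' : k ≤ m := Nat.le_of_succ_le hk
      have hlt' : (B k).ncard < (B (k+1)).ncard :=
        Set.ncard_lt_ncard (lt_of_le_of_ne (hmono k) (hstrict k hk)) (hBfin (k+1) hk)
      exact lt_of_le_of_lt (ih hk') hlt'
  -- but B m ⊆ ball of ncard m
  have hle : (B m).ncard ≤ m :=
    hm ▸ Set.ncard_le_ncard (hBsub m le_rfl) (hball (n-1))
  have := hcard m le_rfl
  omega
end

section
/- Let G be a rooted directed graph without finite strongly connected components in which every vertex has outdegree at most d ≥ 2. Then F_G(n) ≥ log_d(n) − 1 for all n ∈ ℕ. -/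
open scoped ENNReal

section aux

variable {V : Type*} {E : V → V → Prop}

/-- The ball of radius `n` around `v`. -/
def dball (E : V → V → Prop) (v : V) (n : ℕ) : Set V := {w | ∃ k ≤ n, reachIn E k v w}

lemma reachIn_succ_iff {n : ℕ} {a b : V} :
    reachIn E (n+1) a b ↔ ∃ c, reachIn E n a c ∧ E c b := by
  induction n generalizing a with
  | zero =>
    constructor
    · rintro ⟨c, hc, rfl⟩; exact ⟨a, rfl, hc⟩
    · rintro ⟨c, rfl, hc⟩; exact ⟨b, hc, rfl⟩
  | succ n ih =>
    constructor
    · rintro ⟨c, hac, hcb⟩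
      obtain ⟨e, he, heb⟩ := ih.mp hcb
      exact ⟨e, ⟨c, hac, he⟩, heb⟩
    · rintro ⟨c, ⟨e, hae, hec⟩, hcb⟩
      exact ⟨e, hae, ih.mpr ⟨c, hec, hcb⟩⟩

lemma self_mem_dball (v : V) (n : ℕ) : v ∈ dball E v n := ⟨0, Nat.zero_le _, rfl⟩

lemma dball_mono (v : V) {m n : ℕ} (h : m ≤ n) : dball E v m ⊆ dball E v n :=
  fun _ ⟨k, hk, hr⟩ => ⟨k, hk.trans h, hr⟩

lemma dball_succ_subset (v : V) (n : ℕ) :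
    dball E v (n+1) ⊆ {v} ∪ ⋃ u ∈ dball E v n, {w | E u w} := by
  rintro w ⟨k, hk, hr⟩
  cases k with
  | zero => exact Or.inl (by cases hr; rfl)
  | succ j =>
    obtain ⟨c, hvc, hcw⟩ := reachIn_succ_iff.mp hr
    exact Or.inr (Set.mem_biUnion ⟨j, Nat.lt_succ_iff.mp (Nat.lt_of_lt_of_le (Nat.lt_succ_self j) hk), hvc⟩ hcw)

lemma dball_finite (hdeg : ∀ v : V, {w | E v w}.Finite) (v : V) :
    ∀ n : ℕ, (dball E v n).Finite := by
  intro n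
  induction n with
  | zero =>
    apply Set.Finite.subset (Set.finite_singleton v)
    rintro w ⟨k, hk, hr⟩
    interval_cases k
    cases hr; rfl
  | succ n ih =>
    apply Set.Finite.subset (((Set.finite_singleton v).union (ih.biUnion fun u _ => hdeg u)))
    exact dball_succ_subset v n

lemma gdist_le_iff {a b : V} {n : ℕ} :
    gdist E a b ≤ (n : ℕ∞) ↔ b ∈ dball E a n := by
  constructor
  · intro h
    by_contra hb
    have hall : ∀ k : ℕ, reachIn E k a b → n < k := by
      intro k hk
      by_contra hkn
      exact hb ⟨k, Nat.le_of_not_lt hkn, hk⟩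
    have hlow : ((n : ℕ∞) + 1) ≤ gdist E a b := by
      apply le_sInf
      rintro x ⟨k, rfl, hk⟩
      have := hall k hk
      exact_mod_cast Nat.succ_le_of_lt this
    have : (n : ℕ∞) + 1 ≤ (n : ℕ∞) := hlow.trans h
    simp [ENat.add_one_le_iff] at this
  · rintro ⟨k, hk, hr⟩
    calc gdist E a b ≤ (k : ℕ∞) := sInf_le ⟨k, rfl, hr⟩
    _ ≤ (n : ℕ∞) := by exact_mod_cast hk

lemma reflTransGen_to_reachIn {v w : V} (h : Relation.ReflTransGen E v w) :
    ∃ k, reachIn E k v w := by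
  induction h with
  | refl => exact ⟨0, rfl⟩
  | tail _ he ih =>
    obtain ⟨k, hk⟩ := ih
    exact ⟨k + 1, reachIn_succ_iff.mpr ⟨_, hk, he⟩⟩

lemma dball_stabilize {v : V} {k : ℕ} (h : dball E v (k+1) ⊆ dball E v k) :
    ∀ m, dball E v m ⊆ dball E v k := by
  intro m
  induction m with
  | zero =>
    rintro w ⟨j, hj, hr⟩
    interval_cases j
    cases hr
    exact self_mem_dball v k
  | succ m ih =>
    rintro w ⟨j, hj, hr⟩
    cases j with
    | zero => cases hr; exact self_mem_dball v k
    | succ i =>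
      obtain ⟨c, hvc, hcw⟩ := reachIn_succ_iff.mp hr
      obtain ⟨i', hi', hr'⟩ := ih ⟨i, Nat.lt_succ_iff.mp (Nat.lt_of_lt_of_le (Nat.lt_succ_self i) hj), hvc⟩
      exact h ⟨i' + 1, Nat.succ_le_succ hi', reachIn_succ_iff.mpr ⟨c, hr', hcw⟩⟩

lemma dball_ssubset (hdeg : ∀ v : V, {w | E v w}.Finite)
    (hscc : ∀ v : V, ¬ (scc E v).Finite) (v : V) (k : ℕ) :
    dball E v k ⊂ dball E v (k+1) := by
  refine ⟨dball_mono v (Nat.le_succ k), fun hsub => ?_⟩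
  apply hscc v
  apply Set.Finite.subset (dball_finite hdeg v k)
  rintro w ⟨hvw, -⟩
  obtain ⟨j, hj⟩ := reflTransGen_to_reachIn hvw
  exact dball_stabilize hsub j ⟨j, le_refl j, hj⟩

lemma dball_card_lower (hdeg : ∀ v : V, {w | E v w}.Finite)
    (hscc : ∀ v : V, ¬ (scc E v).Finite) (v : V) (n : ℕ) :
    n + 1 ≤ (dball E v n).ncard := by
  induction n with
  | zero =>
    rw [Nat.succ_le_iff]
    exact (Set.ncard_pos (dball_finite hdeg v 0)).mpr ⟨v, self_mem_dball v 0⟩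
  | succ n ih =>
    have := Set.ncard_lt_ncard (dball_ssubset hdeg hscc v n) (dball_finite hdeg v (n+1))
    omega

lemma ncard_biUnion_le {d : ℕ} {s : Set V} (hs : s.Finite) (f : V → Set V)
    (hf : ∀ u, (f u).Finite) (hcard : ∀ u, (f u).ncard ≤ d) :
    (⋃ u ∈ s, f u).ncard ≤ d * s.ncard := by
  refine Set.Finite.induction_on (motive := fun s _ => (⋃ u ∈ s, f u).ncard ≤ d * s.ncard) s hs (by simp) ?_
  intro a s ha hs ih
  · rw [Set.biUnion_insert]
    calc (f a ∪ ⋃ u ∈ s, f u).ncard ≤ (f a).ncard + (⋃ u ∈ s, f u).ncard :=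
          Set.ncard_union_le _ _
    _ ≤ d + d * s.ncard := Nat.add_le_add (hcard a) ih
    _ = d * (insert a s).ncard := by
          rw [Set.ncard_insert_of_notMem ha hs]; ring

lemma dball_card_upper {d : ℕ} (hd : 2 ≤ d) (hdeg : ∀ v : V, {w | E v w}.Finite)
    (hcard : ∀ v : V, {w | E v w}.ncard ≤ d) (v : V) (n : ℕ) :
    (dball E v n).ncard + 1 ≤ 2 * d ^ n := by
  induction n with
  | zero =>
    have h1 : (dball E v 0).ncard ≤ 1 := by
      apply le_trans (Set.ncard_le_ncard _ (Set.finite_singleton v))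
      · simp
      · rintro w ⟨k, hk, hr⟩
        interval_cases k
        cases hr; rfl
    simpa using Nat.add_le_add_right h1 1
  | succ n ih =>
    have hsub := dball_succ_subset (E := E) v n
    have hball := dball_finite hdeg v n
    have hun : (dball E v (n+1)).ncard ≤ 1 + d * (dball E v n).ncard := by
      calc (dball E v (n+1)).ncard
          ≤ ({v} ∪ ⋃ u ∈ dball E v n, {w | E u w}).ncard :=
            Set.ncard_le_ncard hsub
              (((Set.finite_singleton v).union (hball.biUnion fun u _ => hdeg u)))
      _ ≤ ({v} : Set V).ncard + (⋃ u ∈ dball E v n, {w | E u w}).ncard :=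
            Set.ncard_union_le _ _
      _ ≤ 1 + d * (dball E v n).ncard := by
            have := ncard_biUnion_le hball (fun u => {w | E u w}) hdeg hcard
            simpa using Nat.add_le_add_left this 1
    have hstep : d * ((dball E v n).ncard + 1) ≤ 2 * d ^ (n+1) := by
      calc d * ((dball E v n).ncard + 1) ≤ d * (2 * d ^ n) :=
            Nat.mul_le_mul_left d ih
      _ = 2 * d ^ (n+1) := by ring
    have : 2 + d * (dball E v n).ncard ≤ d * ((dball E v n).ncard + 1) := by
      nlinarith
    omega

end aux

/-- If a rooted directed graph has no finite strongly connected components and all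
outdegrees are at most `d ≥ 2`, then `F_G(n) ≥ log_d n − 1` for all `n`. -/
theorem stmt3 {V : Type*} (E : V → V → Prop) (o : V) (d : ℕ) (hd : 2 ≤ d)
    (hroot : ∀ v, Relation.ReflTransGen E o v)
    (hdeg : ∀ v : V, {w | E v w}.Finite ∧ {w | E v w}.ncard ≤ d)
    (hscc : ∀ v : V, ¬ (scc E v).Finite) :
    ∀ n : ℕ, ENNReal.ofReal (Real.logb d n - 1) ≤ (ballSpread E o n : ℝ≥0∞) := by
  intro n
  have hdeg1 : ∀ v : V, {w | E v w}.Finite := fun v => (hdeg v).1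
  have hdeg2 : ∀ v : V, {w | E v w}.ncard ≤ d := fun v => (hdeg v).2
  -- trivial case n = 0
  rcases Nat.eq_zero_or_pos n with rfl | hn
  · refine le_trans (le_of_eq ?_) (by positivity)
    rw [ENNReal.ofReal_eq_zero]
    simp [Real.logb]
  -- the infimum is attained
  have : Nonempty V := ⟨o⟩
  set T : V → ℕ∞ := fun v => ⨆ w ∈ {w | gdist E v w ≤ (n : ℕ∞)}, gdist E o w with hT
  obtain ⟨v₀, hv₀⟩ : ∃ v₀, T v₀ = ⨅ v, T v := by
    have h := csInf_mem (Set.range_nonempty T)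
    rw [iInf]
    exact h.imp fun i hi => hi
  have hBS : ballSpread E o n = T v₀ := hv₀.symm
  rw [hBS]
  rcases eq_or_ne (T v₀) ⊤ with htop | hfin
  · simp [htop]
  obtain ⟨m, hm⟩ := WithTop.ne_top_iff_exists.mp hfin
  rw [← hm]
  -- every vertex in `dball v₀ n` lies in `dball o m`
  have hsub : dball E v₀ n ⊆ dball E o m := by
    intro w hw
    have h1 : gdist E v₀ w ≤ (n : ℕ∞) := gdist_le_iff.mpr hw
    have h2 : gdist E o w ≤ T v₀ := le_biSup _ h1
    rw [← hm] at h2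
    exact gdist_le_iff.mp h2
  -- counting
  have hlow : n + 1 ≤ (dball E v₀ n).ncard := dball_card_lower hdeg1 hscc v₀ n
  have hmid : (dball E v₀ n).ncard ≤ (dball E o m).ncard :=
    Set.ncard_le_ncard hsub (dball_finite hdeg1 o m)
  have hupp : (dball E o m).ncard + 1 ≤ 2 * d ^ m := dball_card_upper hd hdeg1 hdeg2 o m
  have hkey : n ≤ d ^ (m + 1) := by
    have h2d : 2 * d ^ m ≤ d ^ (m+1) := by
      rw [pow_succ, mul_comm]
      exact Nat.mul_le_mul_left _ hd
    omega
  -- pass to reals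
  have hd1 : (1 : ℝ) < (d : ℝ) := by exact_mod_cast hd.trans_lt' one_lt_two
  have hlogb : Real.logb d n ≤ m + 1 := by
    calc Real.logb d n ≤ Real.logb d ((d : ℝ) ^ (m+1)) := by
          apply Real.logb_le_logb_of_le hd1 (by exact_mod_cast hn)
          exact_mod_cast hkey
    _ = m + 1 := by
          rw [Real.logb_pow, Real.logb_self_eq_one hd1]
          push_cast; ring
  calc ENNReal.ofReal (Real.logb d n - 1) ≤ ENNReal.ofReal m := by
        apply ENNReal.ofReal_le_ofReal; linarith
  _ = ((m : ℕ∞) : ℝ≥0∞) := by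
        rw [ENat.toENNReal_coe, ENNReal.ofReal_natCast]
end

section
/- Let S be a semigroup generated by a finite set T of size d, and suppose S contains a finite right ideal I (i.e., IS ⊆ I and I is finite and nonempty). Let R_n = X_1⋯X_n be a simple random walk on S where X_i are i.i.d. uniform on T. Then E[|R_n|] is bounded uniformly in n, where |a| denotes the word length of a with respect to T. -/
open MeasureTheory ProbabilityTheory
open scoped ENNReal

/-- Word length of `a` in a monoid with respect to a generating set `T`:
the least `k` such that `a` is a product of `k` elements of `T`. -/
noncomputable def wordLength {S : Type*} [Monoid S] (T : Finset S) (a : S) : ℕ :=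
  sInf {k : ℕ | ∃ l : List S, l.length = k ∧ (∀ t ∈ l, t ∈ T) ∧ l.prod = a}

lemma wordLength_le_length {S : Type*} [Monoid S] (T : Finset S) {l : List S}
    (h : ∀ t ∈ l, t ∈ T) : wordLength T l.prod ≤ l.length :=
  Nat.sInf_le ⟨l, rfl, h, rfl⟩

lemma exists_rep {S : Type*} [Monoid S] {T : Finset S}
    (hgen : Submonoid.closure (T : Set S) = ⊤) (x : S) :
    ∃ l : List S, (∀ t ∈ l, t ∈ T) ∧ l.prod = x := by
  have hx : x ∈ Submonoid.closure (T : Set S) := by rw [hgen]; trivial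
  exact Submonoid.exists_list_of_mem_closure hx

lemma wordLength_mul_le {S : Type*} [Monoid S] {T : Finset S}
    (hgen : Submonoid.closure (T : Set S) = ⊤) (x y : S) :
    wordLength T (x * y) ≤ wordLength T x + wordLength T y := by
  have hne : ∀ z : S, {k : ℕ | ∃ l : List S, l.length = k ∧ (∀ t ∈ l, t ∈ T) ∧ l.prod = z}.Nonempty := by
    intro z
    obtain ⟨l, hl, hp⟩ := exists_rep hgen z
    exact ⟨l.length, l, rfl, hl, hp⟩
  obtain ⟨lx, hlx, hmx, hpx⟩ := Nat.sInf_mem (hne x)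
  obtain ⟨ly, hly, hmy, hpy⟩ := Nat.sInf_mem (hne y)
  refine Nat.sInf_le ⟨lx ++ ly, ?_, ?_, ?_⟩
  · rw [List.length_append, hlx, hly]; rfl
  · intro t ht; rcases List.mem_append.mp ht with h | h
    · exact hmx t h
    · exact hmy t h
  · rw [List.prod_append, hpx, hpy]

/-- If a finitely generated semigroup (monoid) contains a finite nonempty right
ideal, then the expected word length `E[|R_n|]` of the simple random walk is
bounded uniformly in `n`. -/
theorem stmt5 {S : Type*} [Monoid S] (T : Finset S) (hT : T.Nonempty)
    (hgen : Submonoid.closure (T : Set S) = ⊤)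
    (I : Set S) (hIfin : I.Finite) (hIne : I.Nonempty)
    (hideal : ∀ a ∈ I, ∀ s : S, a * s ∈ I)
    {Ω : Type*} [MeasurableSpace Ω] (μ : Measure Ω) [IsProbabilityMeasure μ]
    (X : ℕ → Ω → S)
    (hmem : ∀ i ω, X i ω ∈ T)
    (hunif : ∀ i, ∀ t ∈ T, μ {ω | X i ω = t} = 1 / T.card)
    (hindep : iIndepFun (m := fun _ => (⊤ : MeasurableSpace S)) X μ) :
    ∃ C : ℝ≥0∞, C ≠ ⊤ ∧ ∀ n : ℕ,
      ∫⁻ ω, (wordLength T (((List.range n).map (fun i => X i ω)).prod) : ℝ≥0∞) ∂μ ≤ C := by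
  classical
  -- the max word length over the ideal
  set M : ℕ := hIfin.toFinset.sup (wordLength T) with hM
  have hMle : ∀ x ∈ I, wordLength T x ≤ M := by
    intro x hx
    exact Finset.le_sup (hIfin.mem_toFinset.mpr hx)
  by_cases h1 : (1 : S) ∈ I
  · -- easy case: the whole monoid is the ideal
    refine ⟨M, by simp, fun n => ?_⟩
    calc ∫⁻ ω, (wordLength T (((List.range n).map (fun i => X i ω)).prod) : ℝ≥0∞) ∂μ
        ≤ ∫⁻ _, (M : ℝ≥0∞) ∂μ := by
          refine lintegral_mono fun ω => ?_
          have : ((List.range n).map (fun i => X i ω)).prod ∈ I := by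
            have := hideal 1 h1 (((List.range n).map (fun i => X i ω)).prod)
            rwa [one_mul] at this
          exact (Nat.cast_le (α := ℝ≥0∞)).mpr (hMle _ this)
      _ = M := by simp
  -- main case
  obtain ⟨a, ha⟩ := hIne
  obtain ⟨l, hlT, hlp⟩ := exists_rep hgen a
  set L := l.length with hLdef
  have hL0 : 0 < L := by
    rcases Nat.eq_zero_or_pos L with h | h
    · exfalso; apply h1
      have hnil : l = [] := List.length_eq_zero_iff.mp h
      rw [hnil, List.prod_nil] at hlp
      rwa [← hlp] at ha
    · exact h
  set d := T.card with hd
  have hd0 : 0 < d := Finset.card_pos.mpr hT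
  -- block events
  set B : ℕ → Set Ω := fun j => {ω | ∀ t < L, X (L * j + t) ω = l.getD t 1} with hBdef
  set Cev : ℕ → Set Ω := fun j => {ω | ∀ i < j, ω ∉ B i} with hCdef
  set C' : ℕ → Set Ω := fun j => toMeasurable μ (Cev j) with hC'def
  have hCsub : ∀ j, Cev j ⊆ C' j := fun j => subset_toMeasurable μ _
  have hblock : ∀ j ω, ω ∈ B j → ((List.range L).map (fun t => X (L * j + t) ω)) = l := by
    intro j ω hω
    apply List.ext_getElem
    · simp [hLdef]
    · intro i h1i h2i
      have hiL : i < L := by simpa using h1i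
      have := hω i hiL
      simp only [List.getElem_map, List.getElem_range]
      rw [this, List.getD_eq_getElem]
  have hkey : ∀ n j ω, L * j + L ≤ n → ω ∈ B j →
      wordLength T (((List.range n).map (fun i => X i ω)).prod) ≤ L * j + M := by
    intro n j ω hn hω
    set r := n - (L * j + L) with hr
    have hn' : n = (L * j + L) + r := by omega
    have hsplit : (List.range n).map (fun i => X i ω) =
        ((List.range (L * j)).map (fun i => X i ω) ++
          (List.range L).map (fun t => X (L * j + t) ω)) ++
          (List.range r).map (fun t => X ((L * j + L) + t) ω) := by
      rw [hn', List.range_add, List.range_add]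
      simp [List.map_append, List.map_map, Function.comp_def]
    rw [hsplit, List.prod_append, List.prod_append, hblock j ω hω, hlp, mul_assoc]
    have h2 : a * ((List.range r).map (fun t => X ((L * j + L) + t) ω)).prod ∈ I :=
      hideal a ha _
    calc wordLength T _ ≤ wordLength T ((List.range (L * j)).map (fun i => X i ω)).prod +
          wordLength T (a * ((List.range r).map (fun t => X ((L * j + L) + t) ω)).prod) :=
        wordLength_mul_le hgen _ _
      _ ≤ L * j + M := by
          gcongr
          · calc wordLength T _ ≤ ((List.range (L * j)).map (fun i => X i ω)).length :=
                wordLength_le_length T (by simp; intro t _; exact hmem t ω)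
              _ = L * j := by simp
          · exact hMle _ h2
  -- pointwise bound
  have hptwise : ∀ n ω, (wordLength T (((List.range n).map (fun i => X i ω)).prod) : ℝ≥0∞)
      ≤ M + L * ∑' j, (C' j).indicator (fun _ => (1:ℝ≥0∞)) ω := by
    intro n ω
    have hsum : ∀ J : ℕ, (∀ jj ≤ J, ω ∈ Cev jj) →
        ((J : ℝ≥0∞) + 1) ≤ ∑' j, (C' j).indicator (fun _ => (1:ℝ≥0∞)) ω := by
      intro J hJ
      have h1' : ∀ jj ∈ Finset.range (J + 1), (C' jj).indicator (fun _ => (1:ℝ≥0∞)) ω = 1 := by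
        intro jj hjj
        rw [Set.indicator_of_mem (hCsub jj (hJ jj (Nat.lt_succ_iff.mp (Finset.mem_range.mp hjj))))]
      calc ((J : ℝ≥0∞) + 1) = ∑ jj ∈ Finset.range (J + 1), (C' jj).indicator (fun _ => (1:ℝ≥0∞)) ω := by
            rw [Finset.sum_congr rfl h1']
            simp
        _ ≤ _ := ENNReal.sum_le_tsum _
    by_cases hex : ∃ j, L * j + L ≤ n ∧ ω ∈ B j
    · set J := Nat.find hex with hJ
      obtain ⟨hJn, hJB⟩ := Nat.find_spec hex
      have hCmem : ∀ jj ≤ J, ω ∈ Cev jj := by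
        intro jj hjj i hij
        have hiJ : i < J := lt_of_lt_of_le hij hjj
        have := Nat.find_min hex hiJ
        intro hBi
        exact this ⟨le_trans (by nlinarith [Nat.le_of_lt hiJ]) hJn, hBi⟩
      have h1' := hkey n J ω hJn hJB
      calc (wordLength T (((List.range n).map (fun i => X i ω)).prod) : ℝ≥0∞)
          ≤ ((L * J + M : ℕ) : ℝ≥0∞) := by exact_mod_cast h1'
        _ = M + L * ((J : ℝ≥0∞)) := by push_cast; ring
        _ ≤ M + L * ((J : ℝ≥0∞) + 1) := by gcongr; simp
        _ ≤ M + L * ∑' j, (C' j).indicator (fun _ => (1:ℝ≥0∞)) ω := by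
            gcongr; exact hsum J hCmem
    · push_neg at hex
      set K := n / L with hK
      have hCmem : ∀ jj ≤ K, ω ∈ Cev jj := by
        intro jj hjj i hij
        apply hex i
        have : i + 1 ≤ K := by omega
        calc L * i + L = L * (i + 1) := by ring
          _ ≤ L * K := Nat.mul_le_mul_left L this
          _ ≤ n := by rw [hK]; exact Nat.mul_div_le n L
      have hwl : wordLength T (((List.range n).map (fun i => X i ω)).prod) ≤ n := by
        calc wordLength T _ ≤ ((List.range n).map (fun i => X i ω)).length :=
            wordLength_le_length T (by simp; intro t _; exact hmem t ω)
          _ = n := by simp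
      have hnK : n ≤ L * (K + 1) := by
        have h3 : L * K + n % L = n := by rw [hK]; exact Nat.div_add_mod n L
        have h2 : n % L < L := Nat.mod_lt n hL0
        calc n = L * K + n % L := h3.symm
          _ ≤ L * K + L := by omega
          _ = L * (K + 1) := by ring
      calc (wordLength T (((List.range n).map (fun i => X i ω)).prod) : ℝ≥0∞)
          ≤ ((L * (K + 1) : ℕ) : ℝ≥0∞) := by exact_mod_cast le_trans hwl hnK
        _ = L * ((K : ℝ≥0∞) + 1) := by push_cast; ring
        _ ≤ L * ∑' j, (C' j).indicator (fun _ => (1:ℝ≥0∞)) ω := by gcongr; exact hsum K hCmem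
        _ ≤ _ := le_add_self
  -- integral bound
  have hint : ∀ n, ∫⁻ ω, (wordLength T (((List.range n).map (fun i => X i ω)).prod) : ℝ≥0∞) ∂μ
      ≤ M + L * ∑' j, μ (Cev j) := by
    intro n
    have hmeasC : ∀ j, MeasurableSet (C' j) := fun j => measurableSet_toMeasurable μ _
    calc ∫⁻ ω, (wordLength T (((List.range n).map (fun i => X i ω)).prod) : ℝ≥0∞) ∂μ
        ≤ ∫⁻ ω, ((M : ℝ≥0∞) + L * ∑' j, (C' j).indicator (fun _ => (1:ℝ≥0∞)) ω) ∂μ :=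
          lintegral_mono (hptwise n)
      _ = (M : ℝ≥0∞) + L * ∑' j, μ (Cev j) := by
          rw [lintegral_add_left measurable_const, lintegral_const, measure_univ, mul_one]
          congr 1
          rw [lintegral_const_mul _ (Measurable.ennreal_tsum fun j =>
            measurable_const.indicator (hmeasC j))]
          congr 1
          rw [lintegral_tsum fun j => (measurable_const.indicator (hmeasC j)).aemeasurable]
          congr 1
          ext j
          rw [lintegral_indicator_const (hmeasC j), one_mul, measure_toMeasurable]
  -- cylinder measure
  have hcyl : ∀ (m : ℕ) (v : ℕ → S), (∀ i, i < m → v i ∈ T) →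
      μ {ω | ∀ i < m, X i ω = v i} = ((d : ℝ≥0∞))⁻¹ ^ m := by
    intro m v hv
    have hset : {ω | ∀ i < m, X i ω = v i} = ⋂ i ∈ Finset.range m, X i ⁻¹' {v i} := by
      ext ω; simp [Set.mem_iInter]
    rw [hset, hindep.meas_biInter (fun i _ => ⟨{v i}, MeasurableSpace.measurableSet_top, rfl⟩)]
    have heach : ∀ i ∈ Finset.range m, μ (X i ⁻¹' {v i}) = ((d:ℝ≥0∞))⁻¹ := by
      intro i hi
      have h2 := hunif i (v i) (hv i (Finset.mem_range.mp hi))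
      rw [one_div] at h2
      rw [← h2]
      rfl
    rw [Finset.prod_congr rfl heach, Finset.prod_const, Finset.card_range]
  -- bad words
  set good : Fin L → {x // x ∈ T} := fun t => ⟨l.get t, hlT _ (l.get_mem t)⟩ with hgood
  set Bad1 : Finset (Fin L → {x // x ∈ T}) := Finset.univ.filter (fun b => b ≠ good) with hBad1
  have hBad1card : Bad1.card = d ^ L - 1 := by
    rw [hBad1, Finset.filter_ne' Finset.univ good, Finset.card_erase_of_mem (Finset.mem_univ _),
      Finset.card_univ, Fintype.card_pi]
    simp [hd]
  set q : ℝ≥0∞ := (Bad1.card : ℝ≥0∞) * ((d : ℝ≥0∞))⁻¹ ^ L with hq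
  -- probability bound
  have hqC : ∀ j, μ (Cev j) ≤ q ^ j := by
    intro j
    set BadJ : Finset (Fin j → Fin L → {x // x ∈ T}) := Fintype.piFinset (fun _ => Bad1) with hBadJ
    set vfun : (Fin j → Fin L → {x // x ∈ T}) → ℕ → S := fun b k =>
      if hk : k < L * j then
        (b ⟨k / L, by
          rw [Nat.div_lt_iff_lt_mul hL0]; exact Nat.lt_of_lt_of_eq hk (mul_comm L j)⟩
          ⟨k % L, Nat.mod_lt _ hL0⟩ : S)
      else 1 with hvfun
    set Dset : (Fin j → Fin L → {x // x ∈ T}) → Set Ω := fun b =>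
      {ω | ∀ k < L * j, X k ω = vfun b k} with hDset
    have hcover : Cev j ⊆ ⋃ b ∈ BadJ, Dset b := by
      intro ω hω
      set b : Fin j → Fin L → {x // x ∈ T} := fun i t => ⟨X (L * i + t) ω, hmem _ ω⟩ with hb
      have hbmem : b ∈ BadJ := by
        rw [hBadJ, Fintype.mem_piFinset]
        intro i
        rw [hBad1, Finset.mem_filter]
        refine ⟨Finset.mem_univ _, fun hcon => ?_⟩
        refine hω i i.isLt ?_
        intro t ht
        have := congrFun hcon ⟨t, ht⟩
        have h2 : X (L * i + t) ω = l.get ⟨t, ht⟩ := congrArg Subtype.val this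
        rw [h2, List.getD_eq_getElem]
        rfl
      refine Set.mem_biUnion hbmem ?_
      intro k hk
      rw [hvfun]
      simp only [dif_pos hk]
      show X k ω = X (L * (k / L) + k % L) ω
      congr 1
      have h5 := Nat.div_add_mod k L
      omega
    have hDm : ∀ b, μ (Dset b) = ((d:ℝ≥0∞))⁻¹ ^ (L * j) := by
      intro b
      refine hcyl (L * j) (vfun b) ?_
      intro k hk
      rw [hvfun]
      simp only [dif_pos hk]
      exact (b _ _).2
    calc μ (Cev j) ≤ μ (⋃ b ∈ BadJ, Dset b) := measure_mono hcover
      _ ≤ ∑ b ∈ BadJ, μ (Dset b) := measure_biUnion_finset_le _ _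
      _ = BadJ.card * ((d:ℝ≥0∞))⁻¹ ^ (L * j) := by
          rw [Finset.sum_congr rfl (fun b _ => hDm b), Finset.sum_const, nsmul_eq_mul]
      _ = q ^ j := by
          rw [hBadJ, Fintype.card_piFinset]
          simp only [Finset.prod_const, Finset.card_univ, Fintype.card_fin]
          rw [hq, mul_pow, Nat.cast_pow, pow_mul]
  -- conclusion
  have hq1 : q < 1 := by
    rw [hq, hBad1card]
    have hne0 : ((d:ℝ≥0∞)) ^ L ≠ 0 := pow_ne_zero _ (Nat.cast_ne_zero.mpr hd0.ne')
    have hnetop : ((d:ℝ≥0∞)) ^ L ≠ ⊤ := ENNReal.pow_ne_top (ENNReal.natCast_ne_top d)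
    calc ((d ^ L - 1 : ℕ) : ℝ≥0∞) * ((d:ℝ≥0∞))⁻¹ ^ L
        = ((d ^ L - 1 : ℕ) : ℝ≥0∞) / ((d:ℝ≥0∞)) ^ L := by
          rw [← ENNReal.inv_pow, div_eq_mul_inv]
      _ < 1 := by
          rw [ENNReal.div_lt_iff (Or.inl hne0) (Or.inl hnetop), one_mul, ← Nat.cast_pow]
          exact_mod_cast Nat.sub_lt (Nat.pow_pos hd0) one_pos
  refine ⟨(M:ℝ≥0∞) + L * ∑' j : ℕ, q ^ j, ?_, fun n => ?_⟩
  · rw [ENNReal.tsum_geometric]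
    refine ENNReal.add_ne_top.mpr ⟨ENNReal.natCast_ne_top M,
      ENNReal.mul_ne_top (ENNReal.natCast_ne_top L) ?_⟩
    simp only [Ne, ENNReal.inv_eq_top]
    intro hcon
    exact (not_le.mpr hq1) (tsub_eq_zero_iff_le.mp hcon)
  · refine (hint n).trans ?_
    exact add_le_add_right (mul_le_mul_right (ENNReal.tsum_le_tsum hqC) _) _
end

section
/- Let Σ be an alphabet of size d ≥ 2, n ∈ ℕ, k ≤ n/2, and let X_1,…,X_n be i.i.d. uniform random letters from Σ. Let g : Σ* → Σ^k be any function. Then Pr(∃ j with 1 ≤ j ≤ n−k such that X_{j+1}⋯X_{j+k} = g(X_1⋯X_j)) ≥ 1/(4(d^k/n + 1)). -/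
open Finset

section Aux

variable {A : Type*} [Fintype A] [DecidableEq A]

/-- The match condition at position `j`. -/
def Mtch (n k : ℕ) (g : List A → List A) (j : ℕ) (ω : Fin n → A) : Prop :=
  ((List.ofFn ω).drop j).take k = g ((List.ofFn ω).take j)

open Classical in
/-- Event: match at position `j`. -/
noncomputable def Aset (n k : ℕ) (g : List A → List A) (j : ℕ) : Finset (Fin n → A) :=
  Finset.univ.filter (Mtch n k g j)

open Classical in
/-- Event: first match (among positions `≥ 1`) at position `j`. -/
noncomputable def Bset (n k : ℕ) (g : List A → List A) (j : ℕ) : Finset (Fin n → A) :=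
  Aset n k g j \ (Finset.Ico 1 j).biUnion (Aset n k g)

lemma mem_Aset {n k : ℕ} {g : List A → List A} {j : ℕ} {ω : Fin n → A} :
    ω ∈ Aset n k g j ↔ Mtch n k g j ω := by
  classical
  simp [Aset]

lemma mem_Bset {n k : ℕ} {g : List A → List A} {j : ℕ} {ω : Fin n → A} :
    ω ∈ Bset n k g j ↔ Mtch n k g j ω ∧ ∀ i, 1 ≤ i → i < j → ¬ Mtch n k g i ω := by
  classical
  simp only [Bset, Finset.mem_sdiff, mem_Aset, Finset.mem_biUnion, Finset.mem_Ico]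
  constructor
  · rintro ⟨h1, h2⟩
    exact ⟨h1, fun i hi1 hi2 hm => h2 ⟨i, ⟨hi1, hi2⟩, hm⟩⟩
  · rintro ⟨h1, h2⟩
    exact ⟨h1, fun ⟨i, ⟨hi1, hi2⟩, hm⟩ => h2 i hi1 hi2 hm⟩

/-- prefix of `List.ofFn` depends only on the first coordinates -/
lemma take_ofFn_congr {n j : ℕ} (ω ω' : Fin n → A)
    (h : ∀ i : Fin n, (i : ℕ) < j → ω i = ω' i) :
    (List.ofFn ω).take j = (List.ofFn ω').take j := by
  apply List.ext_getElem (by simp)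
  intro r h1 h2
  simp only [List.length_take, List.length_ofFn] at h1
  simp only [List.getElem_take, List.getElem_ofFn]
  exact h _ (show r < j by omega)

/-- the match condition depends only on the first `j+k` coordinates -/
lemma Mtch_congr {n k j : ℕ} {g : List A → List A} (hjk : j + k ≤ n) (ω ω' : Fin n → A)
    (h : ∀ i : Fin n, (i : ℕ) < j + k → ω i = ω' i) :
    Mtch n k g j ω ↔ Mtch n k g j ω' := by
  have h1 : (List.ofFn ω).take j = (List.ofFn ω').take j :=
    take_ofFn_congr ω ω' (fun i hi => h i (by omega))
  have h2 : ((List.ofFn ω).drop j).take k = ((List.ofFn ω').drop j).take k := by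
    apply List.ext_getElem (by simp)
    intro r hr1 hr2
    simp only [List.length_take, List.length_drop, List.length_ofFn] at hr1
    simp only [List.getElem_take, List.getElem_drop, List.getElem_ofFn]
    exact h _ (show j + r < j + k by omega)
  unfold Mtch
  rw [h1, h2]

/-- pointwise characterization of the match condition -/
lemma Mtch_iff {n k j : ℕ} {g : List A → List A} (hg : ∀ l, (g l).length = k)
    (hjk : j + k ≤ n) (ω : Fin n → A) :
    Mtch n k g j ω ↔ ∀ r, (hr : r < k) →
      ω ⟨j + r, by omega⟩ = (g ((List.ofFn ω).take j))[r]'(by rw [hg]; omega) := by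
  unfold Mtch
  constructor
  · intro he r hr
    have hl : r < (((List.ofFn ω).drop j).take k).length := by simp; omega
    have := List.getElem_of_eq he hl
    simp only [List.getElem_take, List.getElem_drop, List.getElem_ofFn] at this
    convert this using 2
  · intro hp
    apply List.ext_getElem (by simp [hg]; omega)
    intro r h1 h2
    simp only [List.getElem_take, List.getElem_drop, List.getElem_ofFn]
    have := hp r (by simp at h1; omega)
    convert this using 2

/-- Core counting lemma: if `E` depends only on coordinates `< a` and on `T` the
coordinates in `[a, b)` are determined by earlier coordinates, then
`|E ∩ T| * |A|^(b-a) ≤ |E|`. -/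
lemma core_count {n : ℕ} (a b : ℕ) (hab : a ≤ b) (hbn : b ≤ n)
    (E T : Finset (Fin n → A))
    (hE : ∀ ω ω' : Fin n → A, (∀ i : Fin n, (i : ℕ) < a → ω i = ω' i) → ω ∈ E → ω' ∈ E)
    (F : ℕ → (Fin n → A) → A)
    (hF : ∀ r, a ≤ r → r < b → ∀ ω ω' : Fin n → A,
      (∀ i : Fin n, (i : ℕ) < r → ω i = ω' i) → F r ω = F r ω')
    (hT : ∀ ω ∈ T, ∀ i : Fin n, a ≤ (i : ℕ) → (i : ℕ) < b → ω i = F i ω) :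
    (E ∩ T).card * Fintype.card A ^ (b - a) ≤ E.card := by
  classical
  have hcard : (E ∩ T).card * Fintype.card A ^ (b - a)
      = ((E ∩ T) ×ˢ (Finset.univ : Finset (Fin (b - a) → A))).card := by
    rw [Finset.card_product, Finset.card_univ, Fintype.card_fun, Fintype.card_fin]
  rw [hcard]
  apply Finset.card_le_card_of_injOn (fun x => fun i : Fin n =>
    if h : a ≤ (i : ℕ) ∧ (i : ℕ) < b then x.2 ⟨(i : ℕ) - a, by omega⟩ else x.1 i)
  · rintro ⟨ω, v⟩ hx
    simp only [Finset.mem_coe, Finset.mem_product, Finset.mem_inter] at hx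
    apply hE ω _ _ hx.1.1
    intro i hi
    beta_reduce
    rw [dif_neg (by omega)]
  · rintro ⟨ω, v⟩ hx ⟨ω', v'⟩ hy heq
    simp only [Finset.mem_coe, Finset.mem_product, Finset.mem_inter] at hx hy
    have key : ∀ m, ∀ i : Fin n, (i : ℕ) < m → ω i = ω' i := by
      intro m
      induction m with
      | zero => intro i hi; omega
      | succ m ih =>
        intro i hi
        by_cases hab' : a ≤ (i : ℕ) ∧ (i : ℕ) < b
        · rw [hT ω hx.1.2 i hab'.1 hab'.2, hT ω' hy.1.2 i hab'.1 hab'.2]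
          exact hF i hab'.1 hab'.2 ω ω' (fun i' hi' => ih i' (by omega))
        · have h3 := congrFun heq i
          simpa only [dif_neg hab'] using h3
    have hw : ω = ω' := funext fun i => key n i i.2
    have hv : v = v' := by
      funext r
      have hr : a + (r : ℕ) < n := by omega
      have h3 := congrFun heq ⟨a + (r : ℕ), hr⟩
      have hc : a ≤ a + (r : ℕ) ∧ a + (r : ℕ) < b := ⟨Nat.le_add_right a r, by omega⟩
      simpa only [dif_pos hc, Nat.add_sub_cancel_left, Fin.eta] using h3
    rw [Prod.mk.injEq]
    exact ⟨hw, hv⟩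

lemma Aset_card_lower {n k : ℕ} {g : List A → List A} (hg : ∀ l, (g l).length = k)
    (j : ℕ) (hjk : j + k ≤ n) :
    Fintype.card A ^ (n - k) ≤ (Aset n k g j).card := by
  classical
  have hA : Fintype.card A ^ (n - k)
      = (Finset.univ : Finset (Fin (n - k) → A)).card := by
    rw [Finset.card_univ, Fintype.card_fun, Fintype.card_fin]
  rw [hA]
  set Ψ : (Fin (n - k) → A) → (Fin n → A) := fun u i =>
    if _h1 : (i : ℕ) < j then u ⟨i, by omega⟩
    else if _h2 : (i : ℕ) < j + k then
      (g (List.ofFn (fun r : Fin j => u ⟨r, by omega⟩)))[(i : ℕ) - j]'(by rw [hg]; omega)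
    else u ⟨(i : ℕ) - k, by omega⟩ with hΨ
  have hpre : ∀ u : Fin (n - k) → A,
      (List.ofFn (Ψ u)).take j = List.ofFn (fun r : Fin j => u ⟨r, by omega⟩) := by
    intro u
    apply List.ext_getElem (by simp; omega)
    intro r h1 h2
    simp only [List.length_ofFn] at h2
    simp only [List.getElem_take, List.getElem_ofFn, hΨ]
    rw [dif_pos (show r < j from h2)]
  apply Finset.card_le_card_of_injOn Ψ
  · intro u _
    rw [Finset.mem_coe, mem_Aset, Mtch_iff hg hjk]
    intro r hr
    have h1 : ¬ (j + r < j) := by omega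
    have h2 : j + r < j + k := by omega
    simp only [hΨ, dif_neg h1, dif_pos h2, hpre u]
    congr 1
    · exact congrArg g (hpre u).symm
    · omega
  · intro u _ u' _ heq
    funext r
    by_cases hcase : (r : ℕ) < j
    · have h3 := congrFun heq ⟨(r : ℕ), by omega⟩
      simpa only [hΨ, dif_pos hcase, Fin.eta] using h3
    · have hrk : (r : ℕ) + k < n := by omega
      have h3 := congrFun heq ⟨(r : ℕ) + k, hrk⟩
      have hc1 : ¬ ((r : ℕ) + k < j) := by omega
      have hc2 : ¬ ((r : ℕ) + k < j + k) := by omega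
      simpa only [hΨ, dif_neg hc1, dif_neg hc2, Nat.add_sub_cancel, Fin.eta] using h3

lemma Bset_mem_congr {n k j : ℕ} {g : List A → List A} (hjk : j + k ≤ n)
    (ω ω' : Fin n → A) (h : ∀ i : Fin n, (i : ℕ) < j + k → ω i = ω' i) :
    ω ∈ Bset n k g j → ω' ∈ Bset n k g j := by
  rw [mem_Bset, mem_Bset]
  rintro ⟨h1, h2⟩
  constructor
  · exact (Mtch_congr hjk ω ω' h).1 h1
  · intro i hi1 hi2 hm
    exact h2 i hi1 hi2 ((Mtch_congr (by omega) ω ω'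
      (fun i' hi' => h i' (by omega))).2 hm)

lemma pair_bound {n k : ℕ} [Nonempty A] {g : List A → List A} (hg : ∀ l, (g l).length = k)
    (j t : ℕ) (ht : 1 ≤ t) (hb : j + t + k ≤ n) :
    (Bset n k g j ∩ Aset n k g (j + t)).card * Fintype.card A ^ (min t k)
      ≤ (Bset n k g j).card := by
  classical
  set a := max (j + k) (j + t) with ha
  have hmin : min t k = j + t + k - a := by omega
  rw [hmin]
  apply core_count a (j + t + k) (by omega) hb _ _ ?hE
    (fun r ω => (g ((List.ofFn ω).take (j + t))).getD (r - (j + t))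
      (Classical.arbitrary A)) ?hF ?hT
  case hE =>
    intro ω ω' hagree hmem
    exact Bset_mem_congr (by omega) ω ω'
      (fun i hi => hagree i (by omega)) hmem
  case hF =>
    intro r hr1 hr2 ω ω' hagree
    beta_reduce
    rw [take_ofFn_congr ω ω' (fun i hi => hagree i (by omega))]
  case hT =>
    intro ω hmem i hi1 hi2
    have hm := (Mtch_iff hg (show (j + t) + k ≤ n by omega) ω).1 (mem_Aset.1 hmem)
    have hr : (i : ℕ) - (j + t) < k := by omega
    have := hm ((i : ℕ) - (j + t)) hr
    have hieq : i = ⟨(j + t) + ((i : ℕ) - (j + t)), by omega⟩ := by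
      apply Fin.ext; simp; omega
    beta_reduce
    rw [List.getD_eq_getElem _ _ (by rw [hg]; omega)]
    conv_lhs => rw [hieq]
    exact this

lemma exists_Bset {n k : ℕ} {g : List A → List A} {j : ℕ} (hj : 1 ≤ j) {ω : Fin n → A}
    (h : ω ∈ Aset n k g j) : ∃ j', 1 ≤ j' ∧ j' ≤ j ∧ ω ∈ Bset n k g j' := by
  classical
  set S := (Finset.Icc 1 j).filter (fun i => Mtch n k g i ω) with hS
  have hjS : j ∈ S := by
    simp only [hS, Finset.mem_filter, Finset.mem_Icc]
    exact ⟨⟨hj, le_refl j⟩, mem_Aset.1 h⟩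
  have hne : S.Nonempty := ⟨j, hjS⟩
  set j0 := S.min' hne with hj0
  have hj0S : j0 ∈ S := S.min'_mem hne
  simp only [hS, Finset.mem_filter, Finset.mem_Icc] at hj0S
  refine ⟨j0, hj0S.1.1, hj0S.1.2, ?_⟩
  rw [mem_Bset]
  refine ⟨hj0S.2, fun i hi1 hi2 hm => ?_⟩
  have hle : j0 ≤ i := by
    apply S.min'_le i
    simp only [hS, Finset.mem_filter, Finset.mem_Icc]
    exact ⟨⟨hi1, by omega⟩, hm⟩
  omega

lemma Bset_disjoint {n k : ℕ} {g : List A → List A} {j' j'' : ℕ} (h1 : 1 ≤ j')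
    (h : j' < j'') : Disjoint (Bset n k g j') (Bset n k g j'') := by
  rw [Finset.disjoint_left]
  intro ω hω hω'
  exact (mem_Bset.1 hω').2 j' h1 h (mem_Bset.1 hω).1

lemma partial_geom : ∀ L : ℕ, ∑ t ∈ Finset.Icc 1 L, ((2:ℝ)⁻¹) ^ t ≤ 1 - ((2:ℝ)⁻¹) ^ L := by
  intro L
  induction L with
  | zero => rw [Finset.Icc_eq_empty (by omega)]; simp
  | succ L ih =>
    rw [Finset.sum_Icc_succ_top (by omega)]
    have h1 : ((2:ℝ)⁻¹) ^ (L+1) = ((2:ℝ)⁻¹) ^ L * 2⁻¹ := pow_succ _ _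
    linarith

lemma geom_bound (q : ℝ) (hq : 2 ≤ q) (k : ℕ) (L : ℕ) :
    ∑ t ∈ Finset.Icc 1 L, (q ^ (min t k))⁻¹ ≤ 1 + L * (q ^ k)⁻¹ := by
  have hq0 : (0:ℝ) < q := by linarith
  have h1 : ∀ t ∈ Finset.Icc 1 L, (q ^ (min t k))⁻¹ ≤ ((2:ℝ)⁻¹) ^ t + (q ^ k)⁻¹ := by
    intro t _
    rcases min_cases t k with ⟨he, _⟩ | ⟨he, _⟩
    · rw [he]
      have h2 : (2:ℝ) ^ t ≤ q ^ t := pow_le_pow_left₀ (by norm_num) hq t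
      have h3 : (q ^ t)⁻¹ ≤ ((2:ℝ)⁻¹) ^ t := by
        rw [inv_pow]
        exact inv_anti₀ (by positivity) h2
      have h4 : (0:ℝ) ≤ (q ^ k)⁻¹ := by positivity
      linarith
    · rw [he]
      have h5 : (0:ℝ) ≤ ((2:ℝ)⁻¹) ^ t := by positivity
      linarith
  calc ∑ t ∈ Finset.Icc 1 L, (q ^ (min t k))⁻¹
      ≤ ∑ t ∈ Finset.Icc 1 L, (((2:ℝ)⁻¹) ^ t + (q ^ k)⁻¹) := Finset.sum_le_sum h1
    _ = (∑ t ∈ Finset.Icc 1 L, ((2:ℝ)⁻¹) ^ t) + L * (q ^ k)⁻¹ := by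
        rw [Finset.sum_add_distrib, Finset.sum_const, Nat.card_Icc]
        simp
    _ ≤ 1 + L * (q ^ k)⁻¹ := by
        have h6 := partial_geom L
        have h7 : (0:ℝ) ≤ ((2:ℝ)⁻¹) ^ L := by positivity
        linarith

lemma sum_min_shift (q : ℝ) (hq : 2 ≤ q) (k j' M : ℕ) (h : j' ≤ M) :
    ∑ j ∈ Finset.Ioc j' M, (q ^ (min (j - j') k))⁻¹ ≤ 1 + M * (q ^ k)⁻¹ := by
  have h1 : Finset.Ioc j' M = (Finset.Icc 1 (M - j')).map (addLeftEmbedding j') := by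
    rw [Finset.map_add_left_Icc, show j' + (M - j') = M from by omega,
      Finset.Icc_add_one_left_eq_Ioc]
  rw [h1, Finset.sum_map]
  have h2 : ∀ t ∈ Finset.Icc 1 (M - j'),
      (q ^ (min ((addLeftEmbedding j') t - j') k))⁻¹ = (q ^ (min t k))⁻¹ := by
    intro t _
    simp only [addLeftEmbedding_apply]
    congr 2
    omega
  rw [Finset.sum_congr rfl h2]
  have h3 := geom_bound q hq k (M - j')
  have h4 : ((M - j' : ℕ) : ℝ) ≤ (M : ℝ) := by exact_mod_cast Nat.sub_le M j'
  have h5 : (0:ℝ) ≤ (q ^ k)⁻¹ := by positivity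
  nlinarith

end Aux

/-- Subword-appearance proposition: for a uniformly random word `X₁⋯Xₙ` over an
alphabet of size `d ≥ 2`, `k ≤ n/2`, and any prefix-dependent target
`g : Σ* → Σᵏ`, the probability that for some `1 ≤ j ≤ n−k` the block
`X_{j+1}⋯X_{j+k}` equals `g(X₁⋯X_j)` is at least `1/(4(dᵏ/n + 1))`. -/
theorem stmt6 {A : Type*} [Fintype A] [DecidableEq A] (d n k : ℕ)
    (hcard : Fintype.card A = d) (hd : 2 ≤ d) (hn : 1 ≤ n) (hk : 2 * k ≤ n)
    (g : List A → List A) (hg : ∀ l, (g l).length = k) :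
    (1 : ℝ) / (4 * ((d : ℝ) ^ k / n + 1)) ≤
      ({ω : Fin n → A | ∃ j, 1 ≤ j ∧ j ≤ n - k ∧
          ((List.ofFn ω).drop j).take k = g ((List.ofFn ω).take j)}.ncard : ℝ)
        / (d : ℝ) ^ n := by
  classical
  subst hcard
  have hc2 : (2:ℝ) ≤ (Fintype.card A : ℝ) := by exact_mod_cast hd
  have hc0 : (0:ℝ) < (Fintype.card A : ℝ) := by linarith
  rcases Nat.eq_zero_or_pos k with hk0 | hk1
  · -- trivial case k = 0
    subst hk0
    have hset : {ω : Fin n → A | ∃ j, 1 ≤ j ∧ j ≤ n - 0 ∧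
        ((List.ofFn ω).drop j).take 0 = g ((List.ofFn ω).take j)} = Set.univ := by
      ext ω
      simp only [Set.mem_setOf_eq, Set.mem_univ, iff_true]
      exact ⟨1, le_refl 1, by omega,
        by rw [List.take_zero]; exact (List.eq_nil_of_length_eq_zero (hg _)).symm⟩
    rw [hset, Set.ncard_univ]
    have hcardΩ : ((Nat.card (Fin n → A) : ℕ) : ℝ) = (Fintype.card A : ℝ) ^ n := by
      rw [Nat.card_eq_fintype_card, Fintype.card_fun, Fintype.card_fin]
      push_cast
      rfl
    rw [hcardΩ, div_self (by positivity)]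
    have hn1 : (1:ℝ) ≤ (n:ℝ) := by exact_mod_cast hn
    have hge : (0:ℝ) ≤ (Fintype.card A : ℝ) ^ 0 / (n:ℝ) := by positivity
    rw [div_le_one (by positivity)]
    linarith
  · -- main case k ≥ 1
    have hNe : Nonempty A := Fintype.card_pos_iff.1 (by omega)
    set M := n - k with hM
    have hM1 : 1 ≤ M := by omega
    have hMn : n ≤ 2 * M := by omega
    set J := Finset.Icc 1 M with hJ
    set E := J.biUnion (Aset n k g) with hEdef
    have hsetE : {ω : Fin n → A | ∃ j, 1 ≤ j ∧ j ≤ n - k ∧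
        ((List.ofFn ω).drop j).take k = g ((List.ofFn ω).take j)} = ↑E := by
      ext ω
      simp only [Set.mem_setOf_eq]
      constructor
      · rintro ⟨j, h1, h2, h3⟩
        exact Finset.mem_coe.2 (Finset.mem_biUnion.2
          ⟨j, Finset.mem_Icc.2 ⟨h1, h2⟩, mem_Aset.2 h3⟩)
      · intro h
        obtain ⟨j, hj, hA⟩ := Finset.mem_biUnion.1 (Finset.mem_coe.1 h)
        rw [Finset.mem_Icc] at hj
        exact ⟨j, hj.1, hj.2, mem_Aset.1 hA⟩
    rw [hsetE, Set.ncard_coe_finset]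
    set U := J.biUnion (Bset n k g) with hUdef
    have hEU : E = U := by
      apply Finset.Subset.antisymm
      · intro ω hω
        obtain ⟨j, hjJ, hja⟩ := Finset.mem_biUnion.1 hω
        rw [hJ, Finset.mem_Icc] at hjJ
        obtain ⟨j', h1, h2, h3⟩ := exists_Bset hjJ.1 hja
        exact Finset.mem_biUnion.2 ⟨j', by rw [hJ, Finset.mem_Icc]; omega, h3⟩
      · intro ω hω
        obtain ⟨j, hjJ, hjb⟩ := Finset.mem_biUnion.1 hω
        exact Finset.mem_biUnion.2 ⟨j, hjJ, Finset.sdiff_subset hjb⟩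
    have hdisj : ∀ x ∈ J, ∀ y ∈ J, x ≠ y → Disjoint (Bset n k g x) (Bset n k g y) := by
      intro x hx y hy hxy
      rw [hJ, Finset.mem_Icc] at hx hy
      rcases lt_or_gt_of_ne hxy with h | h
      · exact Bset_disjoint hx.1 h
      · exact (Bset_disjoint hy.1 h).symm
    have hUcard : ((U.card : ℕ) : ℝ) = ∑ j' ∈ J, ((Bset n k g j').card : ℝ) := by
      rw [hUdef, Finset.card_biUnion hdisj]
      push_cast
      rfl
    have hpart : ∀ j ∈ J, (Aset n k g j).card
        = ∑ j' ∈ Finset.Icc 1 j, (Bset n k g j' ∩ Aset n k g j).card := by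
      intro j hj
      rw [hJ, Finset.mem_Icc] at hj
      have hAeq : Aset n k g j
          = (Finset.Icc 1 j).biUnion (fun j' => Bset n k g j' ∩ Aset n k g j) := by
        apply Finset.Subset.antisymm
        · intro ω hω
          obtain ⟨j', h1, h2, h3⟩ := exists_Bset hj.1 hω
          exact Finset.mem_biUnion.2
            ⟨j', Finset.mem_Icc.2 ⟨h1, h2⟩, Finset.mem_inter.2 ⟨h3, hω⟩⟩
        · intro ω hω
          obtain ⟨j', _, hmem⟩ := Finset.mem_biUnion.1 hω
          exact (Finset.mem_inter.1 hmem).2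
      conv_lhs => rw [hAeq]
      apply Finset.card_biUnion
      intro x hx y hy hxy
      rw [Finset.mem_coe, Finset.mem_Icc] at hx hy
      have hd2 : Disjoint (Bset n k g x) (Bset n k g y) := by
        rcases lt_or_gt_of_ne hxy with h | h
        · exact Bset_disjoint hx.1 h
        · exact (Bset_disjoint hy.1 h).symm
      exact hd2.mono Finset.inter_subset_left Finset.inter_subset_left
    have hc3 : ∀ j' ∈ J, ∑ j ∈ Finset.Icc j' M, ((Bset n k g j' ∩ Aset n k g j).card : ℝ)
        ≤ ((Bset n k g j').card : ℝ) * (2 + M * ((Fintype.card A : ℝ) ^ k)⁻¹) := by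
      intro j' hj'
      rw [hJ, Finset.mem_Icc] at hj'
      rw [← Finset.sum_erase_add _ _ (Finset.mem_Icc.2 ⟨le_refl j', hj'.2⟩),
        Finset.Icc_erase_left]
      have hBA : Bset n k g j' ∩ Aset n k g j' = Bset n k g j' :=
        Finset.inter_eq_left.2 Finset.sdiff_subset
      rw [hBA]
      have hterm : ∀ j ∈ Finset.Ioc j' M, ((Bset n k g j' ∩ Aset n k g j).card : ℝ)
          ≤ ((Bset n k g j').card : ℝ) * ((Fintype.card A : ℝ) ^ (min (j - j') k))⁻¹ := by
        intro j hj
        rw [Finset.mem_Ioc] at hj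
        have hp := pair_bound hg j' (j - j') (show 1 ≤ j - j' from by omega)
          (show j' + (j - j') + k ≤ n from by omega)
        rw [show j' + (j - j') = j from by omega] at hp
        have hcast : ((Bset n k g j' ∩ Aset n k g j).card : ℝ)
            * (Fintype.card A : ℝ) ^ (min (j - j') k)
            ≤ ((Bset n k g j').card : ℝ) := by exact_mod_cast hp
        have hqpos : (0:ℝ) < (Fintype.card A : ℝ) ^ (min (j - j') k) := by positivity
        calc ((Bset n k g j' ∩ Aset n k g j).card : ℝ)
            = (((Bset n k g j' ∩ Aset n k g j).card : ℝ)
                * (Fintype.card A : ℝ) ^ (min (j - j') k))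
              * ((Fintype.card A : ℝ) ^ (min (j - j') k))⁻¹ := by field_simp
          _ ≤ ((Bset n k g j').card : ℝ)
                * ((Fintype.card A : ℝ) ^ (min (j - j') k))⁻¹ :=
              mul_le_mul_of_nonneg_right hcast (by positivity)
      have hsum : ∑ j ∈ Finset.Ioc j' M, ((Fintype.card A : ℝ) ^ (min (j - j') k))⁻¹
          ≤ 1 + M * ((Fintype.card A : ℝ) ^ k)⁻¹ :=
        sum_min_shift _ hc2 k j' M hj'.2
      have hB0 : (0:ℝ) ≤ ((Bset n k g j').card : ℝ) := by positivity
      calc (∑ j ∈ Finset.Ioc j' M, ((Bset n k g j' ∩ Aset n k g j).card : ℝ))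
            + ((Bset n k g j').card : ℝ)
          ≤ (∑ j ∈ Finset.Ioc j' M, ((Bset n k g j').card : ℝ)
              * ((Fintype.card A : ℝ) ^ (min (j - j') k))⁻¹)
            + ((Bset n k g j').card : ℝ) :=
            add_le_add_left (Finset.sum_le_sum hterm) _
        _ = ((Bset n k g j').card : ℝ)
              * (∑ j ∈ Finset.Ioc j' M, ((Fintype.card A : ℝ) ^ (min (j - j') k))⁻¹)
            + ((Bset n k g j').card : ℝ) := by rw [← Finset.mul_sum]
        _ ≤ ((Bset n k g j').card : ℝ) * (1 + M * ((Fintype.card A : ℝ) ^ k)⁻¹)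
            + ((Bset n k g j').card : ℝ) :=
            add_le_add_left (mul_le_mul_of_nonneg_left hsum hB0) _
        _ = ((Bset n k g j').card : ℝ) * (2 + M * ((Fintype.card A : ℝ) ^ k)⁻¹) := by ring
    have key : (M:ℝ) * (Fintype.card A : ℝ) ^ (n - k)
        ≤ ((U.card : ℕ) : ℝ) * (2 + M * ((Fintype.card A : ℝ) ^ k)⁻¹) := by
      have c1 : (M:ℝ) * (Fintype.card A : ℝ) ^ (n - k)
          ≤ ∑ j ∈ J, ((Aset n k g j).card : ℝ) := by
        have hterm : ∀ j ∈ J, ((Fintype.card A : ℝ)) ^ (n - k)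
            ≤ ((Aset n k g j).card : ℝ) := by
          intro j hj
          rw [hJ, Finset.mem_Icc] at hj
          have hlow := Aset_card_lower hg j (show j + k ≤ n from by omega)
          calc ((Fintype.card A : ℝ)) ^ (n - k)
              = ((Fintype.card A ^ (n - k) : ℕ) : ℝ) := by push_cast; rfl
            _ ≤ _ := by exact_mod_cast hlow
        calc (M:ℝ) * (Fintype.card A : ℝ) ^ (n - k)
            = ∑ _j ∈ J, (Fintype.card A : ℝ) ^ (n - k) := by
              rw [Finset.sum_const, nsmul_eq_mul, hJ, Nat.card_Icc]
              norm_num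
          _ ≤ _ := Finset.sum_le_sum hterm
      have c2 : ∑ j ∈ J, ((Aset n k g j).card : ℝ)
          = ∑ j' ∈ J, ∑ j ∈ Finset.Icc j' M,
              ((Bset n k g j' ∩ Aset n k g j).card : ℝ) := by
        have e1 : ∑ j ∈ J, ((Aset n k g j).card : ℝ)
            = ∑ j ∈ J, ∑ j' ∈ Finset.Icc 1 j,
                ((Bset n k g j' ∩ Aset n k g j).card : ℝ) := by
          apply Finset.sum_congr rfl
          intro j hj
          rw [hpart j hj]
          push_cast
          rfl
        rw [e1]
        have swap := Finset.sum_Ico_Ico_comm 1 (M+1)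
          (fun j' j => ((Bset n k g j' ∩ Aset n k g j).card : ℝ))
        simp only [Finset.Ico_add_one_right_eq_Icc] at swap
        rw [hJ]
        exact swap.symm
      calc (M:ℝ) * (Fintype.card A : ℝ) ^ (n - k)
          ≤ ∑ j ∈ J, ((Aset n k g j).card : ℝ) := c1
        _ = ∑ j' ∈ J, ∑ j ∈ Finset.Icc j' M,
              ((Bset n k g j' ∩ Aset n k g j).card : ℝ) := c2
        _ ≤ ∑ j' ∈ J, ((Bset n k g j').card : ℝ)
              * (2 + M * ((Fintype.card A : ℝ) ^ k)⁻¹) := Finset.sum_le_sum hc3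
        _ = (∑ j' ∈ J, ((Bset n k g j').card : ℝ))
              * (2 + M * ((Fintype.card A : ℝ) ^ k)⁻¹) := by rw [← Finset.sum_mul]
        _ = ((U.card : ℕ) : ℝ) * (2 + M * ((Fintype.card A : ℝ) ^ k)⁻¹) := by rw [hUcard]
    rw [hEU]
    set q := (Fintype.card A : ℝ) ^ k with hq
    have hq0 : (0:ℝ) < q := by positivity
    have hD0 : (0:ℝ) < (Fintype.card A : ℝ) ^ n := by positivity
    have hn0 : (0:ℝ) < (n:ℝ) := by exact_mod_cast hn
    have key2 : (M:ℝ) * (Fintype.card A : ℝ) ^ n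
        ≤ ((U.card : ℕ) : ℝ) * (2 * q + M) := by
      have hpow : (Fintype.card A : ℝ) ^ (n - k) * q = (Fintype.card A : ℝ) ^ n := by
        rw [hq, ← pow_add]
        congr 1
        omega
      calc (M:ℝ) * (Fintype.card A : ℝ) ^ n
          = ((M:ℝ) * (Fintype.card A : ℝ) ^ (n - k)) * q := by
            rw [mul_assoc, hpow]
        _ ≤ (((U.card : ℕ) : ℝ) * (2 + M * q⁻¹)) * q :=
            mul_le_mul_of_nonneg_right key hq0.le
        _ = ((U.card : ℕ) : ℝ) * (2 * q + M * (q⁻¹ * q)) := by ring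
        _ = ((U.card : ℕ) : ℝ) * (2 * q + M) := by
            rw [inv_mul_cancel₀ (ne_of_gt hq0), mul_one]
    rw [show (4:ℝ) * (q / (n:ℝ) + 1) = (4 * (q + n)) / n from by field_simp,
      one_div_div, div_le_div_iff₀ (by positivity) hD0]
    -- goal : n * card^n ≤ #U * (4 * (q + n))
    have hMle : (M:ℝ) ≤ (n:ℝ) := by exact_mod_cast Nat.sub_le n k
    have hMn' : (n:ℝ) ≤ 2 * (M:ℝ) := by exact_mod_cast hMn
    have hU0 : (0:ℝ) ≤ ((U.card : ℕ) : ℝ) := by positivity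
    nlinarith [key2, mul_le_mul_of_nonneg_right hMn' hD0.le,
      mul_le_mul_of_nonneg_left hMle hU0, hq0.le, hD0.le]
end

section
/- In the semigroup S_m with presentation ⟨x, y | x² = x, x y^j x y^{j'} x = x y^j x whenever j' ≺ j⟩ (where j' ≺ j means j' < m_k ≤ j for some k, given an increasing sequence m_1 = 1 < m_2 < …), every element has a unique normal form y^{j_0} x y^{j_1} x ⋯ y^{j_{t−1}} x y^{j_t} with j_0, j_t ≥ 0, j_1, …, j_{t−1} ≥ 1, and j_1 ⪯ j_2 ⪯ ⋯ ⪯ j_{t−1}. -/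
/-- `j' ≺ j` : there is `k ≥ 1` with `j' < m k ≤ j`. -/
def mPrec (m : ℕ → ℕ) (j' j : ℕ) : Prop := ∃ k, 1 ≤ k ∧ j' < m k ∧ m k ≤ j

/-- `j' ⪯ j` : `j' ≺ j`, or `j` and `j'` lie in a common block `[m k, m (k+1))`. -/
def mPreceq (m : ℕ → ℕ) (j' j : ℕ) : Prop :=
  mPrec m j' j ∨ ∃ k, 1 ≤ k ∧ m k ≤ j ∧ m k ≤ j' ∧ j < m (k+1) ∧ j' < m (k+1)

/-- The letter `x` (as a free monoid element over `Bool`, `true` = x). -/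
def fmx : FreeMonoid Bool := FreeMonoid.of true
/-- The letter `y` (`false` = y). -/
def fmy : FreeMonoid Bool := FreeMonoid.of false

/-- The defining relations of `S_m` : `x² = x` and
`x yʲ x y^{j'} x = x yʲ x` whenever `j' ≺ j` (with `j, j' ≥ 1`). -/
def smRel (m : ℕ → ℕ) : FreeMonoid Bool → FreeMonoid Bool → Prop := fun u v =>
  (u = fmx * fmx ∧ v = fmx) ∨
  ∃ j j', 1 ≤ j ∧ 1 ≤ j' ∧ mPrec m j' j ∧
    u = fmx * fmy ^ j * fmx * fmy ^ j' * fmx ∧ v = fmx * fmy ^ j * fmx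

/-- The semigroup `S_m`. -/
abbrev SM (m : ℕ → ℕ) := (conGen (smRel m)).Quotient

/-- The word `y^{j₀} x y^{j₁} x ⋯ y^{j_{t-1}} x y^{j_t}` associated to the
exponent list `[j₀, j₁, …, j_t]` (one `x` between consecutive exponents). -/
def nfWord : List ℕ → FreeMonoid Bool
  | [] => 1
  | [j] => fmy ^ j
  | j :: rest => fmy ^ j * fmx * nfWord rest

/-- `l = [j₀, …, j_t]` is a valid normal form: nonempty, the interior exponents
`j₁, …, j_{t-1}` are `≥ 1` and form a `⪯`-nondecreasing chain. -/
def isNF (m : ℕ → ℕ) (l : List ℕ) : Prop :=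
  l ≠ [] ∧ (∀ j ∈ l.tail.dropLast, 1 ≤ j) ∧ l.tail.dropLast.Chain' (mPreceq m)

namespace SMNF

variable (m : ℕ → ℕ)

open Classical in
noncomputable def absorb (j : ℕ) : List ℕ → List ℕ
  | [] => []
  | [a] => [a]
  | a :: b :: t => if mPrec m a j then absorb j (b :: t) else a :: b :: t

noncomputable def step : Bool → List ℕ → List ℕ
  | false, [] => [1]
  | false, j :: t => (j+1) :: t
  | true, [] => [0, 0]
  | true, j :: t => if j = 0 ∧ t ≠ [] then j :: t else 0 :: j :: absorb m j t

noncomputable def norm (w : FreeMonoid Bool) : List ℕ :=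
  (FreeMonoid.toList w).foldr (step m) [0]

variable {m}

/-! ### arithmetic on blocks -/

lemma mPrec_trans {a b c : ℕ} (h1 : mPrec m a b) (h2 : mPrec m b c) : mPrec m a c := by
  obtain ⟨k, hk, h1, h2'⟩ := h1
  obtain ⟨k', hk', h3, h4⟩ := h2
  exact ⟨k, hk, h1, le_trans h2' (le_trans (le_of_lt h3) h4)⟩

section arith
variable (hm1 : m 1 = 1) (hmono : ∀ k, 1 ≤ k → m k < m (k + 1))
include hm1 hmono

lemma m_mono : ∀ {k k' : ℕ}, 1 ≤ k → k ≤ k' → m k ≤ m k' := by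
  intro k k' hk hkk
  induction k' with
  | zero => omega
  | succ n ih =>
    rcases Nat.lt_or_ge k (n+1) with h | h
    · have : k ≤ n := by omega
      exact le_trans (ih this) (le_of_lt (hmono n (by omega)))
    · have : k = n + 1 := by omega
      subst this; rfl

lemma m_ge : ∀ k, 1 ≤ k → k ≤ m k := by
  intro k hk
  induction k with
  | zero => omega
  | succ n ih =>
    rcases Nat.eq_or_lt_of_le hk with h | h
    · simp [← h, hm1]
    · have h1 : 1 ≤ n := by omega
      have := hmono n h1
      have := ih h1
      omega

lemma exists_block {a : ℕ} (ha : 1 ≤ a) : ∃ k, 1 ≤ k ∧ m k ≤ a ∧ a < m (k+1) := by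
  classical
  have hbase : 1 ≤ 1 ∧ m 1 ≤ a := ⟨le_refl 1, by omega⟩
  set P := fun k => 1 ≤ k ∧ m k ≤ a with hP
  have hbound : ∀ k, P k → k ≤ a := fun k hk => le_trans (m_ge hm1 hmono k hk.1) hk.2
  obtain ⟨k, hk, hmax⟩ : ∃ k, P k ∧ ∀ k', k < k' → ¬ P k' := by
    refine ⟨Nat.findGreatest P a, Nat.findGreatest_spec (hbound 1 hbase) hbase, ?_⟩
    intro k' hk' hPk'
    exact absurd (Nat.le_findGreatest (hbound k' hPk') hPk') (by omega)
  refine ⟨k, hk.1, hk.2, ?_⟩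
  by_contra h
  exact hmax (k+1) (by omega) ⟨by omega, by omega⟩

/-- If `¬ (a ≺ j)` with `a, j ≥ 1` then `j ⪯ a`. -/
lemma preceq_of_not_prec {a j : ℕ} (ha : 1 ≤ a) (hj : 1 ≤ j) (h : ¬ mPrec m a j) :
    mPreceq m j a := by
  obtain ⟨k, hk, h1, h2⟩ := exists_block hm1 hmono hj
  have hka : m k ≤ a := by
    by_contra hc
    exact h ⟨k, hk, by omega, h1⟩
  rcases Nat.lt_or_ge a (m (k+1)) with h3 | h3
  · exact Or.inr ⟨k, hk, hka, h1, h3, h2⟩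
  · exact Or.inl ⟨k+1, by omega, by omega, h3⟩

/-- If `j ⪯ a` then `¬ (a ≺ j)`. -/
lemma not_prec_of_preceq {a j : ℕ} (h : mPreceq m j a) : ¬ mPrec m a j := by
  rintro ⟨k, hk, h1, h2⟩
  rcases h with ⟨k', hk', h3, h4⟩ | ⟨k', hk', h3, h4, h5, h6⟩
  · omega
  · -- m k' ≤ a < m k ≤ j < m (k'+1) ; so m k' < m k hence k' < k hence m (k'+1) ≤ m k
    have hkk : k' < k := by
      by_contra hc
      have := m_mono hm1 hmono hk (by omega : k ≤ k')
      omega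
    have := m_mono hm1 hmono (by omega : 1 ≤ k'+1) (by omega : k'+1 ≤ k)
    omega

end arith

/-! ### absorb lemmas -/

lemma absorb_suffix (j : ℕ) : ∀ t : List ℕ, absorb m j t <:+ t := by
  intro t
  induction t with
  | nil => simp [absorb]
  | cons a t ih =>
    cases t with
    | nil => simp [absorb]
    | cons b t' =>
      rw [absorb]
      split
      · exact ih.trans (List.suffix_cons a _)
      · exact List.suffix_rfl

lemma absorb_ne_nil (j : ℕ) {t : List ℕ} (ht : t ≠ []) : absorb m j t ≠ [] := by
  induction t with
  | nil => simp at ht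
  | cons a t ih =>
    cases t with
    | nil => simp [absorb]
    | cons b t' =>
      rw [absorb]
      split
      · exact ih (by simp)
      · simp

lemma absorb_head {j a b : ℕ} {t t' : List ℕ} (h : absorb m j t = a :: b :: t') :
    ¬ mPrec m a j := by
  induction t with
  | nil => simp [absorb] at h
  | cons c t ih =>
    cases t with
    | nil => rw [absorb] at h; simp at h
    | cons d t'' =>
      rw [absorb] at h
      split at h
      · exact ih h
      · rename_i hc
        cases h
        exact hc

lemma absorb_eq_of_chain (hm1 : m 1 = 1) (hmono : ∀ k, 1 ≤ k → m k < m (k + 1))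
    {j : ℕ} {t : List ℕ} (hj : 1 ≤ j)
    (h : ∀ a b t', t = a :: b :: t' → mPreceq m j a) : absorb m j t = t := by
  cases t with
  | nil => simp [absorb]
  | cons a t =>
    cases t with
    | nil => simp [absorb]
    | cons b t' =>
      rw [absorb, if_neg (not_prec_of_preceq hm1 hmono (h a b t' rfl))]

/-- Key diamond lemma: `absorb j ∘ absorb j' = absorb j` when `j' ≺ j`. -/
lemma absorb_absorb {j j' : ℕ} (h : mPrec m j' j) :
    ∀ t : List ℕ, absorb m j (absorb m j' t) = absorb m j t := by
  intro t
  induction t with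
  | nil => simp [absorb]
  | cons a t ih =>
    cases t with
    | nil => simp [absorb]
    | cons b t' =>
      rw [absorb, absorb]
      split
      · rename_i ha
        rw [ih, if_pos (mPrec_trans ha h)]
      · rw [absorb]

lemma absorb_cons_of_prec {j a : ℕ} {t : List ℕ} (h : mPrec m a j) (ht : t ≠ []) :
    absorb m j (a :: t) = absorb m j t := by
  cases t with
  | nil => simp at ht
  | cons b t' => rw [absorb, if_pos h]

/-! ### step shape -/

lemma step_true_shape (l : List ℕ) : ∃ L, L ≠ [] ∧ step m true l = 0 :: L := by
  cases l with
  | nil => exact ⟨[0], by simp, rfl⟩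
  | cons j t =>
    rw [step]
    split
    · rename_i hc
      exact ⟨t, hc.2, by rw [hc.1]⟩
    · exact ⟨j :: absorb m j t, by simp, rfl⟩

lemma step_true_idem (l : List ℕ) : step m true (step m true l) = step m true l := by
  obtain ⟨L, hL, hshape⟩ := step_true_shape (m := m) l
  rw [hshape, step, if_pos ⟨rfl, hL⟩]

lemma foldr_replicate_false (n : ℕ) (j : ℕ) (t : List ℕ) :
    (List.replicate n false).foldr (step m) (j :: t) = (n + j) :: t := by
  induction n with
  | zero => simp [List.foldr]
  | succ k ih =>
    rw [List.replicate_succ, List.foldr_cons, ih]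
    show (k + j + 1) :: t = _
    congr 1
    omega

end SMNF

namespace SMNF
variable {m : ℕ → ℕ}

lemma toList_fmy_pow (j : ℕ) : FreeMonoid.toList (fmy ^ j) = List.replicate j false := by
  induction j with
  | zero => simp
  | succ n ih =>
    rw [pow_succ, FreeMonoid.toList_mul, ih, fmy, FreeMonoid.toList_of,
      ← List.replicate_succ']

lemma step_true_cons_pos {j : ℕ} (hj : 1 ≤ j) (t : List ℕ) :
    step m true (j :: t) = 0 :: j :: absorb m j t := by
  rw [step, if_neg]
  rintro ⟨h, -⟩; omega

/-- The crucial invariance: applying a defining relation anywhere does not change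
the result of folding `step` over the word, whatever the initial state. -/
lemma foldr_invariant {u v : FreeMonoid Bool} (h : ConGen.Rel (smRel m) u v) :
    ∀ l : List ℕ, (FreeMonoid.toList u).foldr (step m) l =
      (FreeMonoid.toList v).foldr (step m) l := by
  induction h with
  | of u v huv =>
    intro l
    rcases huv with ⟨hu, hv⟩ | ⟨j, j', hj, hj', hprec, hu, hv⟩
    · subst hu hv
      simp only [fmx, FreeMonoid.toList_mul, FreeMonoid.toList_of, List.append_eq,
        List.cons_append, List.nil_append, List.foldr_cons, List.foldr_nil]
      exact step_true_idem l
    · subst hu hv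
      obtain ⟨L, hL, hshape⟩ := step_true_shape (m := m) l
      simp only [fmx, FreeMonoid.toList_mul, FreeMonoid.toList_of, toList_fmy_pow,
        List.foldr_append, List.foldr_cons, List.foldr_nil]
      rw [hshape, foldr_replicate_false, step_true_cons_pos (by omega),
        foldr_replicate_false, step_true_cons_pos (by omega),
        foldr_replicate_false, step_true_cons_pos (by omega)]
      have h1 : j' + 0 = j' := rfl
      have h2 : j + 0 = j := rfl
      rw [h1, h2]
      congr 2
      rw [absorb_cons_of_prec hprec (absorb_ne_nil j' hL), absorb_absorb hprec]
  | refl w => intro l; rfl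
  | symm _ ih => intro l; exact (ih l).symm
  | trans _ _ ih1 ih2 => intro l; exact (ih1 l).trans (ih2 l)
  | mul _ _ ih1 ih2 =>
    intro l
    simp only [FreeMonoid.toList_mul, List.foldr_append]
    rw [ih2 l, ih1]

lemma norm_invariant {u v : FreeMonoid Bool} (h : conGen (smRel m) u v) :
    norm m u = norm m v :=
  foldr_invariant h [0]

/-! ### normal forms are preserved by `step` -/

lemma dropLast_suffix {s t : List ℕ} (h : s <:+ t) : s.dropLast <:+ t.dropLast := by
  obtain ⟨u, rfl⟩ := h
  rcases eq_or_ne s [] with rfl | hs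
  · simp
  · rw [List.dropLast_append_of_ne_nil hs]
    exact ⟨u, rfl⟩

lemma isNF_step (hm1 : m 1 = 1) (hmono : ∀ k, 1 ≤ k → m k < m (k + 1))
    {l : List ℕ} (hl : isNF m l) (b : Bool) : isNF m (step m b l) := by
  obtain ⟨hne, hall, hchain⟩ := hl
  cases l with
  | nil => exact absurd rfl hne
  | cons j t =>
    cases b with
    | false => exact ⟨by simp [step], hall, hchain⟩
    | true =>
      rw [step]
      split
      · exact ⟨by rename_i hc; simp [hc.2], hall, hchain⟩
      · rename_i hc
        rcases eq_or_ne t [] with rfl | ht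
        · refine ⟨by simp, ?_, ?_⟩ <;> simp [absorb, List.Chain']
        · have hj : 1 ≤ j := by
            rcases Nat.eq_zero_or_pos j with h0 | h0
            · exact absurd ⟨h0, ht⟩ hc
            · exact h0
          have hsne : absorb m j t ≠ [] := absorb_ne_nil j ht
          have hsuf : (absorb m j t).dropLast <:+ t.dropLast :=
            dropLast_suffix (absorb_suffix j t)
          have htail : (0 :: j :: absorb m j t).tail.dropLast
              = j :: (absorb m j t).dropLast := by
            simp [List.dropLast_cons_of_ne_nil hsne]
          refine ⟨by simp, ?_, ?_⟩
          · rw [htail]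
            intro a ha
            rcases List.mem_cons.1 ha with rfl | ha
            · exact hj
            · exact hall a (hsuf.subset ha)
          · rw [htail, List.Chain', List.isChain_cons]
            constructor
            · intro y hy
              cases hsx : absorb m j t with
              | nil => exact absurd hsx hsne
              | cons a s' =>
                cases s' with
                | nil => rw [hsx] at hy; simp at hy
                | cons b' t'' =>
                  have hya : y = a := by
                    rw [hsx, List.dropLast_cons_of_ne_nil (by simp)] at hy
                    simp at hy
                    omega
                  rw [hya]
                  have hprec : ¬ mPrec m a j := absorb_head hsx
                  have hy1 : 1 ≤ a := by
                    refine hall a (hsuf.subset ?_)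
                    rw [hsx, List.dropLast_cons_of_ne_nil (by simp)]
                    simp
                  exact preceq_of_not_prec hm1 hmono hy1 hj hprec
            · exact hchain.suffix hsuf

lemma isNF_singleton (j : ℕ) : isNF m [j] := ⟨by simp, by simp, by simp [List.Chain']⟩

lemma isNF_foldr (hm1 : m 1 = 1) (hmono : ∀ k, 1 ≤ k → m k < m (k + 1))
    (L : List Bool) {l : List ℕ} (hl : isNF m l) : isNF m (L.foldr (step m) l) := by
  induction L with
  | nil => exact hl
  | cons b L ih => exact isNF_step hm1 hmono ih b

lemma isNF_norm (hm1 : m 1 = 1) (hmono : ∀ k, 1 ≤ k → m k < m (k + 1))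
    (w : FreeMonoid Bool) : isNF m (norm m w) :=
  isNF_foldr hm1 hmono _ (isNF_singleton 0)

end SMNF

namespace SMNF
variable {m : ℕ → ℕ}

lemma nfWord_cons {j : ℕ} {t : List ℕ} (ht : t ≠ []) :
    nfWord (j :: t) = fmy ^ j * fmx * nfWord t := by
  cases t with
  | nil => exact absurd rfl ht
  | cons a t => rfl

lemma cg_xx (w : FreeMonoid Bool) :
    conGen (smRel m) (fmx * fmx * w) (fmx * w) :=
  (conGen (smRel m)).mul
    (ConGen.Rel.of _ _ (Or.inl ⟨rfl, rfl⟩)) ((conGen (smRel m)).refl w)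

lemma cg_absorb {j : ℕ} (hj : 1 ≤ j) {t : List ℕ} (hall : ∀ a ∈ t.dropLast, 1 ≤ a) :
    conGen (smRel m) (fmx * fmy ^ j * fmx * nfWord (absorb m j t))
      (fmx * fmy ^ j * fmx * nfWord t) := by
  induction t with
  | nil => exact (conGen (smRel m)).refl _
  | cons a t ih =>
    cases t with
    | nil => exact (conGen (smRel m)).refl _
    | cons b t' =>
      rw [absorb]
      split
      · rename_i hp
        have ha : 1 ≤ a := hall a (by rw [List.dropLast_cons_of_ne_nil (by simp)]; simp)
        refine Con.trans _ (ih ?_) ?_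
        · intro c hc
          exact hall c (by rw [List.dropLast_cons_of_ne_nil (by simp)]; simp [hc])
        · have hrel : conGen (smRel m) (fmx * fmy ^ j * fmx)
              (fmx * fmy ^ j * fmx * fmy ^ a * fmx) :=
            Con.symm _ (ConGen.Rel.of _ _ (Or.inr ⟨j, a, hj, ha, hp, rfl, rfl⟩))
          have := (conGen (smRel m)).mul hrel ((conGen (smRel m)).refl (nfWord (b :: t')))
          rw [nfWord_cons (t := b :: t') (by simp)]
          have heq : fmx * fmy ^ j * fmx * fmy ^ a * fmx * nfWord (b :: t')
              = fmx * fmy ^ j * fmx * (fmy ^ a * fmx * nfWord (b :: t')) := by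
            simp [mul_assoc]
          rw [← heq]
          exact this
      · exact (conGen (smRel m)).refl _

lemma cg_step {l : List ℕ} (hl : isNF m l) (b : Bool) :
    conGen (smRel m) (nfWord (step m b l)) (FreeMonoid.of b * nfWord l) := by
  obtain ⟨hne, hall, -⟩ := hl
  cases l with
  | nil => exact absurd rfl hne
  | cons j t =>
    cases b with
    | false =>
      show conGen (smRel m) (nfWord ((j+1) :: t)) (fmy * nfWord (j :: t))
      cases t with
      | nil =>
        show conGen (smRel m) (fmy ^ (j+1)) (fmy * fmy ^ j)
        rw [pow_succ']
        exact (conGen (smRel m)).refl _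
      | cons c t' =>
        show conGen (smRel m) (fmy ^ (j+1) * fmx * nfWord (c :: t'))
          (fmy * (fmy ^ j * fmx * nfWord (c :: t')))
        rw [pow_succ', mul_assoc, mul_assoc, mul_assoc]
        exact (conGen (smRel m)).refl _
    | true =>
      rw [step]
      split
      · rename_i hc
        obtain ⟨rfl, ht⟩ := hc
        rw [nfWord_cons ht]
        simp only [pow_zero, one_mul]
        exact Con.symm _ (cg_xx (nfWord t))
      · rcases eq_or_ne t [] with rfl | ht
        · show conGen (smRel m) (nfWord [0, j]) (fmx * fmy ^ j)
          show conGen (smRel m) (fmy ^ 0 * fmx * nfWord [j]) _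
          simp only [pow_zero, one_mul]
          exact (conGen (smRel m)).refl _
        · have hj : 1 ≤ j := by
            rename_i hc
            rcases Nat.eq_zero_or_pos j with h0 | h0
            · exact absurd ⟨h0, ht⟩ hc
            · exact h0
          have hsne : absorb m j t ≠ [] := absorb_ne_nil j ht
          rw [nfWord_cons (t := j :: absorb m j t) (by simp),
            nfWord_cons hsne, nfWord_cons ht]
          simp only [pow_zero, one_mul]
          show conGen (smRel m) (fmx * fmy ^ j * fmx * nfWord (absorb m j t))
            (fmx * (fmy ^ j * fmx * nfWord t))
          have heq1 : fmx * (fmy ^ j * fmx * nfWord (absorb m j t))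
              = fmx * fmy ^ j * fmx * nfWord (absorb m j t) := by simp [mul_assoc]
          have heq2 : fmx * (fmy ^ j * fmx * nfWord t)
              = fmx * fmy ^ j * fmx * nfWord t := by simp [mul_assoc]
          rw [heq2]
          exact cg_absorb hj hall

lemma cg_foldr (hm1 : m 1 = 1) (hmono : ∀ k, 1 ≤ k → m k < m (k + 1))
    (L : List Bool) {l : List ℕ} (hl : isNF m l) :
    conGen (smRel m) (nfWord (L.foldr (step m) l)) (FreeMonoid.ofList L * nfWord l) := by
  induction L with
  | nil => rw [show FreeMonoid.ofList ([] : List Bool) = 1 from rfl, one_mul]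
           exact (conGen (smRel m)).refl _
  | cons b L ih =>
    have h1 := cg_step (isNF_foldr hm1 hmono L hl) b
    have h2 := (conGen (smRel m)).mul ((conGen (smRel m)).refl (FreeMonoid.of b)) ih
    refine Con.trans _ (Con.trans _ h1 h2) ?_
    rw [show FreeMonoid.ofList (b :: L) = FreeMonoid.of b * FreeMonoid.ofList L from rfl,
      mul_assoc]
    exact (conGen (smRel m)).refl _

lemma cg_norm (hm1 : m 1 = 1) (hmono : ∀ k, 1 ≤ k → m k < m (k + 1))
    (w : FreeMonoid Bool) : conGen (smRel m) (nfWord (norm m w)) w := by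
  have := cg_foldr hm1 hmono (FreeMonoid.toList w) (isNF_singleton 0)
  rw [show nfWord [0] = (1 : FreeMonoid Bool) from rfl, mul_one,
    FreeMonoid.ofList_toList] at this
  exact this

/-! ### normal forms are fixed by normalization -/

lemma isNF_tail {j : ℕ} {rest : List ℕ} (h : isNF m (j :: rest)) (hr : rest ≠ []) :
    isNF m rest := by
  obtain ⟨-, hall, hchain⟩ := h
  refine ⟨hr, ?_, ?_⟩
  · intro a ha
    refine hall a ?_
    cases rest with
    | nil => simp at ha
    | cons r rt =>
      cases rt with
      | nil => simp at ha
      | cons c rt' =>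
        simp only [List.tail_cons] at ha ⊢
        rw [List.dropLast_cons_of_ne_nil (by simp)]
        exact List.mem_cons_of_mem _ ha
  · cases rest with
    | nil => simp [List.Chain']
    | cons r rt =>
      cases rt with
      | nil => simp [List.Chain']
      | cons c rt' =>
        simp only [List.tail_cons] at hchain ⊢
        rw [List.dropLast_cons_of_ne_nil (by simp)] at hchain
        exact hchain.tail

lemma norm_nfWord (hm1 : m 1 = 1) (hmono : ∀ k, 1 ≤ k → m k < m (k + 1))
    {l : List ℕ} (hl : isNF m l) :
    (FreeMonoid.toList (nfWord l)).foldr (step m) [0] = l := by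
  induction l with
  | nil => exact absurd rfl hl.1
  | cons j rest ih =>
    rcases eq_or_ne rest [] with rfl | hr
    · show (FreeMonoid.toList (fmy ^ j)).foldr (step m) [0] = [j]
      rw [toList_fmy_pow, foldr_replicate_false]
      simp
    · have hrest := isNF_tail hl hr
      rw [nfWord_cons hr]
      simp only [FreeMonoid.toList_mul, toList_fmy_pow, fmx, FreeMonoid.toList_of,
        List.foldr_append, List.foldr_cons, List.foldr_nil]
      rw [ih hrest]
      have hstep : step m true rest = 0 :: rest := by
        cases rest with
        | nil => exact absurd rfl hr
        | cons r0 rt =>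
          rcases eq_or_ne rt [] with rfl | hrt
          · rw [step, if_neg (by rintro ⟨-, h⟩; exact h rfl)]
            simp [absorb]
          · have hr0 : 1 ≤ r0 := by
              refine hl.2.1 r0 ?_
              simp only [List.tail_cons]
              rw [List.dropLast_cons_of_ne_nil hrt]
              simp
            rw [step_true_cons_pos hr0]
            congr 1
            congr 1
            refine absorb_eq_of_chain hm1 hmono hr0 ?_
            intro a b t' heq
            have hchain := hl.2.2
            simp only [List.tail_cons] at hchain
            rw [heq, List.dropLast_cons_of_ne_nil (by simp),
              List.dropLast_cons_of_ne_nil (by simp), List.Chain', List.isChain_cons] at hchain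
            exact hchain.1 a (by simp)
      rw [hstep, foldr_replicate_false]
      show (j + 0) :: rest = j :: rest
      norm_num
end SMNF

/-- Every element of `S_m` has a unique normal form
`y^{j₀} x y^{j₁} x ⋯ y^{j_{t-1}} x y^{j_t}` with interior exponents `≥ 1`
forming a `⪯`-nondecreasing chain. -/
theorem stmt10 (m : ℕ → ℕ) (hm1 : m 1 = 1) (hmono : ∀ k, 1 ≤ k → m k < m (k + 1))
    (a : SM m) :
    ∃! l : List ℕ, isNF m l ∧ (conGen (smRel m)).mk' (nfWord l) = a := by
  obtain ⟨w, rfl⟩ := Con.mk'_surjective a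
  refine ⟨SMNF.norm m w, ⟨SMNF.isNF_norm hm1 hmono w, ?_⟩, ?_⟩
  · exact (Con.eq _).mpr (SMNF.cg_norm hm1 hmono w)
  · rintro l' ⟨hl', heq⟩
    have h1 : conGen (smRel m) (nfWord l') w := (Con.eq _).mp heq
    exact (SMNF.norm_nfWord hm1 hmono hl').symm.trans (SMNF.foldr_invariant h1 [0])
end

section
/- In the rewriting system on words over {x, y} with rules r: xx → x and s_{j,j'}: x y^j x y^{j'} x → x y^j x (for all j' ≺ j), every overlap ambiguity is resolvable: applying the two possible reductions to any overlapping occurrence of left-hand sides yields words that reduce to a common word. -/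
/-- One-step reduction: replace an occurrence of a left-hand side
(`xx` or `x yʲ x y^{j'} x` with `j' ≺ j`) by the corresponding right-hand side. -/
def smRed (m : ℕ → ℕ) (u v : FreeMonoid Bool) : Prop :=
  ∃ a b u' v', smRel m u' v' ∧ u = a * u' * b ∧ v = a * v' * b

namespace S11
open List

def Lw (j j' : ℕ) : List Bool :=
  true :: (replicate j false ++ (true :: (replicate j' false ++ [true])))
def Rw (j : ℕ) : List Bool := true :: (replicate j false ++ [true])

lemma tl_pow (j : ℕ) : (fmy ^ j : FreeMonoid Bool).toList = replicate j false := by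
  induction j with
  | zero => rfl
  | succ n ih => rw [pow_succ, FreeMonoid.toList_mul, ih]; simp [List.replicate_succ']; rfl

lemma tl_x : fmx.toList = [true] := rfl
lemma tl_xx : (fmx * fmx).toList = [true, true] := rfl
lemma tl_of (l : List Bool) : (FreeMonoid.ofList l).toList = l := rfl

lemma tl_L (j j' : ℕ) : (fmx * fmy ^ j * fmx * fmy ^ j' * fmx).toList = Lw j j' := by
  simp [FreeMonoid.toList_mul, tl_pow, tl_x, Lw]

lemma tl_R (j : ℕ) : (fmx * fmy ^ j * fmx).toList = Rw j := by
  simp [FreeMonoid.toList_mul, tl_pow, tl_x, Rw]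

lemma eq_of_toList {a b : FreeMonoid Bool} (h : a.toList = b.toList) : a = b :=
  FreeMonoid.toList.injective h

lemma step_gen {m : ℕ → ℕ} {u' v' : FreeMonoid Bool} (h : smRel m u' v') (a b : List Bool)
    {u v : FreeMonoid Bool} (hu : u.toList = a ++ u'.toList ++ b)
    (hv : v.toList = a ++ v'.toList ++ b) : smRed m u v := by
  refine ⟨FreeMonoid.ofList a, FreeMonoid.ofList b, u', v', h, ?_, ?_⟩
  · exact eq_of_toList (by simp [FreeMonoid.toList_mul, hu, tl_of])
  · exact eq_of_toList (by simp [FreeMonoid.toList_mul, hv, tl_of])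

lemma rel_xx (m : ℕ → ℕ) : smRel m (fmx * fmx) fmx := Or.inl ⟨rfl, rfl⟩

lemma rel_s (m : ℕ → ℕ) (j j' : ℕ) (h1 : 1 ≤ j) (h2 : 1 ≤ j') (h3 : mPrec m j' j) :
    smRel m (fmx * fmy ^ j * fmx * fmy ^ j' * fmx) (fmx * fmy ^ j * fmx) :=
  Or.inr ⟨j, j', h1, h2, h3, rfl, rfl⟩

lemma rel_cons {m : ℕ → ℕ} {u' v' : FreeMonoid Bool} (h : smRel m u' v') :
    ∃ tl, u'.toList = true :: tl := by
  rcases h with ⟨hu, _⟩ | ⟨j, j', _, _, _, hu, _⟩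
  · exact ⟨[true], by rw [hu]; rfl⟩
  · exact ⟨_, by rw [hu, tl_L]; rfl⟩

lemma split_pref {l₁ r₁ l₂ r₂ : List Bool} (h : l₁ ++ r₁ = l₂ ++ r₂)
    (hl : l₁.length ≤ l₂.length) : ∃ c, l₂ = l₁ ++ c ∧ r₁ = c ++ r₂ := by
  rcases List.append_eq_append_iff.1 h with ⟨c, hc1, hc2⟩ | ⟨c, hc1, hc2⟩
  · exact ⟨c, hc1, hc2⟩
  · have : c = [] := by
      have := congrArg List.length hc1
      simp at this
      exact List.eq_nil_of_length_eq_zero (by omega)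
    subst this
    exact ⟨[], by simpa using hc1.symm, by simpa using hc2.symm⟩

lemma rep_match : ∀ (a b : ℕ) (l₁ l₂ : List Bool),
    replicate a false ++ true :: l₁ = replicate b false ++ true :: l₂ → a = b ∧ l₁ = l₂ := by
  intro a
  induction a with
  | zero =>
    intro b l₁ l₂ h
    cases b with
    | zero => simpa using h
    | succ k => simp [List.replicate_succ] at h
  | succ n ih =>
    intro b l₁ l₂ h
    cases b with
    | zero => simp [List.replicate_succ] at h
    | succ k =>
      simp only [List.replicate_succ, List.cons_append, List.cons.injEq] at h
      obtain ⟨h1, h2⟩ := ih k l₁ l₂ h.2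
      exact ⟨by omega, h2⟩

lemma eat : ∀ (a : ℕ) (q s rest : List Bool), q ++ s = replicate a false ++ rest →
    s.head? = some true → ∃ q', q = replicate a false ++ q' ∧ q' ++ s = rest := by
  intro a
  induction a with
  | zero => intro q s rest h _; exact ⟨q, by simp, by simpa using h⟩
  | succ n ih =>
    intro q s rest h hh
    cases q with
    | nil =>
      simp [List.replicate_succ] at h
      rw [h] at hh; simp at hh
    | cons c q₀ =>
      simp only [List.replicate_succ, List.cons_append, List.cons.injEq] at h
      obtain ⟨q', h1, h2⟩ := ih q₀ s rest h.2 hh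
      exact ⟨q', by simp [List.replicate_succ, h.1, h1], h2⟩

lemma suffix_L {j j' : ℕ} {p s : List Bool} (h : p ++ s = Lw j j') (hs : s ≠ [])
    (hh : s.head? = some true) :
    (p = [] ∧ s = Lw j j') ∨ (p = true :: replicate j false ∧ s = Rw j') ∨
    (p = true :: (replicate j false ++ true :: replicate j' false) ∧ s = [true]) := by
  cases p with
  | nil => exact Or.inl ⟨rfl, by simpa using h⟩
  | cons c p₀ =>
    simp only [Lw, List.cons_append, List.cons.injEq] at h
    obtain ⟨rfl, h⟩ := h
    obtain ⟨p₁, h1, h2⟩ := eat _ _ _ _ h hh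
    cases p₁ with
    | nil =>
      refine Or.inr (Or.inl ⟨by simp [h1], ?_⟩)
      simpa [Rw] using h2
    | cons d p₂ =>
      simp only [List.cons_append, List.cons.injEq] at h2
      obtain ⟨rfl, h2⟩ := h2
      obtain ⟨p₃, h3, h4⟩ := eat _ _ _ _ h2 hh
      cases p₃ with
      | nil =>
        refine Or.inr (Or.inr ⟨?_, by simpa using h4⟩)
        simp [h1, h3]
      | cons e p₄ =>
        simp only [List.cons_append, List.cons.injEq] at h4
        obtain ⟨rfl, h4⟩ := h4
        exact absurd h4.symm (by simp [hs])

lemma prec_trans {m : ℕ → ℕ} {a b c : ℕ} (h1 : mPrec m a b) (h2 : mPrec m b c) :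
    mPrec m a c := by
  obtain ⟨k1, hk1, ha, hb⟩ := h1
  obtain ⟨k2, hk2, hb', hc⟩ := h2
  exact ⟨k1, hk1, ha, le_trans hb (le_trans (le_of_lt hb') hc)⟩

lemma main (m : ℕ → ℕ) (u v w a₁ b₁ u₁ v₁ a₂ b₂ u₂ v₂ : FreeMonoid Bool)
    (h₁ : smRel m u₁ v₁) (h₂ : smRel m u₂ v₂)
    (hu₁ : u = a₁ * u₁ * b₁) (hu₂ : u = a₂ * u₂ * b₂)
    (hv : v = a₁ * v₁ * b₁) (hw : w = a₂ * v₂ * b₂)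
    (hle : a₁.toList.length ≤ a₂.toList.length) :
    ∃ z, Relation.ReflTransGen (smRed m) v z ∧ Relation.ReflTransGen (smRed m) w z := by
  have master : a₁.toList ++ u₁.toList ++ b₁.toList = a₂.toList ++ u₂.toList ++ b₂.toList := by
    simpa [FreeMonoid.toList_mul] using congrArg FreeMonoid.toList (hu₁.symm.trans hu₂)
  have hvl : v.toList = a₁.toList ++ v₁.toList ++ b₁.toList := by
    simpa [FreeMonoid.toList_mul] using congrArg FreeMonoid.toList hv
  have hwl : w.toList = a₂.toList ++ v₂.toList ++ b₂.toList := by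
    simpa [FreeMonoid.toList_mul] using congrArg FreeMonoid.toList hw
  by_cases hd : a₁.toList.length + u₁.toList.length ≤ a₂.toList.length
  · -- disjoint case
    obtain ⟨c, hc1, hc2⟩ := split_pref (l₁ := a₁.toList ++ u₁.toList) (r₁ := b₁.toList)
      (l₂ := a₂.toList) (r₂ := u₂.toList ++ b₂.toList)
      (by simpa [List.append_assoc] using master) (by simpa using hd)
    refine ⟨FreeMonoid.ofList (a₁.toList ++ v₁.toList ++ c ++ v₂.toList ++ b₂.toList),
      Relation.ReflTransGen.single ?_, Relation.ReflTransGen.single ?_⟩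
    · exact step_gen h₂ (a₁.toList ++ v₁.toList ++ c) b₂.toList
        (by rw [hvl, hc2]; simp [List.append_assoc]) (by simp [tl_of, List.append_assoc])
    · exact step_gen h₁ a₁.toList (c ++ v₂.toList ++ b₂.toList)
        (by rw [hwl, hc1]; simp [List.append_assoc]) (by simp [tl_of, List.append_assoc])
  · -- overlap case
    push_neg at hd
    obtain ⟨p, hp1, hp2⟩ := split_pref (l₁ := a₁.toList) (r₁ := u₁.toList ++ b₁.toList)
      (l₂ := a₂.toList) (r₂ := u₂.toList ++ b₂.toList)
      (by simpa [List.append_assoc] using master) hle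
    have hplen : p.length < u₁.toList.length := by
      have := congrArg List.length hp1; simp at this; omega
    obtain ⟨s, hs1, hs2⟩ := split_pref (l₁ := p) (l₂ := u₁.toList) hp2.symm (le_of_lt hplen)
    have hsne : s ≠ [] := by
      intro h; rw [h] at hs1
      have := congrArg List.length hs1; simp at this; omega
    obtain ⟨c, s', rfl⟩ : ∃ c s', s = c :: s' := by
      cases s with
      | nil => exact absurd rfl hsne
      | cons c s' => exact ⟨c, s', rfl⟩
    obtain ⟨tl₂, htl₂⟩ := rel_cons h₂
    have hchead : c = true := by
      have h := hs2; rw [htl₂] at h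
      simp only [List.cons_append, List.cons.injEq] at h
      exact h.1.symm
    subst hchead
    rcases id h₁ with ⟨hq₁, hr₁⟩ | ⟨j, j', hj, hj', hprec, hq₁, hr₁⟩
    · -- u₁ = xx, v₁ = x
      have hU₁ : u₁.toList = [true, true] := by rw [hq₁, tl_xx]
      have hV₁ : v₁.toList = [true] := by rw [hr₁, tl_x]
      rw [hU₁] at hs1
      rcases p with _ | ⟨c₀, p₀⟩
      · -- same start, s = [true, true]
        have hs' : s' = [true] := by simpa using hs1.symm
        subst hs'
        have hA : a₂.toList = a₁.toList := by simpa using hp1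
        rcases id h₂ with ⟨hq₂, hr₂⟩ | ⟨j₂, j₂', hj₂, hj₂', hprec₂, hq₂, hr₂⟩
        · -- both xx at same spot : v = w
          have hU₂ : u₂.toList = [true, true] := by rw [hq₂, tl_xx]
          have hV₂ : v₂.toList = [true] := by rw [hr₂, tl_x]
          rw [hU₂] at hs2
          have hB : b₂.toList = b₁.toList := by simpa using hs2
          have hvw : w = v := eq_of_toList (by rw [hvl, hwl, hA, hB, hV₁, hV₂])
          exact ⟨v, Relation.ReflTransGen.refl, hvw ▸ Relation.ReflTransGen.refl⟩
        · -- xx vs s-rule at same spot : impossible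
          exfalso
          have hU₂ : u₂.toList = Lw j₂ j₂' := by rw [hq₂, tl_L]
          rw [hU₂] at hs2
          obtain ⟨k, rfl⟩ : ∃ k, j₂ = k + 1 := ⟨j₂ - 1, by omega⟩
          simp [Lw, List.replicate_succ] at hs2
      · -- p = [true], s = [true]
        have hc₀ : c₀ = true ∧ p₀ = [] ∧ s' = [] := by
          cases p₀ with
          | nil => simpa using hs1.symm
          | cons c₁ p₁ =>
            exfalso
            simp only [List.cons_append, List.cons.injEq] at hs1
            have := hs1.2.2
            simp at this
        obtain ⟨rfl, rfl, rfl⟩ := hc₀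
        have hA : a₂.toList = a₁.toList ++ [true] := by simpa using hp1
        rcases id h₂ with ⟨hq₂, hr₂⟩ | ⟨j₂, j₂', hj₂, hj₂', hprec₂, hq₂, hr₂⟩
        · -- xx overlapping xx in xxx : v = w
          have hU₂ : u₂.toList = [true, true] := by rw [hq₂, tl_xx]
          have hV₂ : v₂.toList = [true] := by rw [hr₂, tl_x]
          rw [hU₂] at hs2
          have hB : b₁.toList = true :: b₂.toList := by simpa using hs2.symm
          have hvw : w = v := eq_of_toList (by
            rw [hvl, hwl, hA, hB, hV₁, hV₂]; simp)
          exact ⟨v, Relation.ReflTransGen.refl, hvw ▸ Relation.ReflTransGen.refl⟩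
        · -- xx before an s-redex sharing the leading x
          have hU₂ : u₂.toList = Lw j₂ j₂' := by rw [hq₂, tl_L]
          have hV₂ : v₂.toList = Rw j₂ := by rw [hr₂, tl_R]
          rw [hU₂] at hs2
          have hB : b₁.toList =
              replicate j₂ false ++ true :: (replicate j₂' false ++ true :: b₂.toList) := by
            have := hs2.symm
            simpa [Lw, List.append_assoc] using this
          refine ⟨FreeMonoid.ofList (a₁.toList ++ Rw j₂ ++ b₂.toList),
            Relation.ReflTransGen.single ?_, Relation.ReflTransGen.single ?_⟩
          · exact step_gen h₂ a₁.toList b₂.toList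
              (by rw [hvl, hV₁, hB, hU₂]; simp [Lw, List.append_assoc])
              (by rw [hr₂, tl_R]; simp [tl_of, List.append_assoc])
          · exact step_gen (rel_xx m) a₁.toList (replicate j₂ false ++ true :: b₂.toList)
              (by rw [hwl, hA, hV₂, tl_xx]; simp [Rw, List.append_assoc])
              (by simp [tl_of, tl_x, Rw, List.append_assoc])
    · -- u₁ = x y^j x y^j' x, v₁ = x y^j x
      have hU₁ : u₁.toList = Lw j j' := by rw [hq₁, tl_L]
      have hV₁ : v₁.toList = Rw j := by rw [hr₁, tl_R]
      rw [hU₁] at hs1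
      rcases suffix_L hs1.symm (by simp) rfl with ⟨hpv, hsv⟩ | ⟨hpv, hsv⟩ | ⟨hpv, hsv⟩
      · -- same start
        subst hpv
        have hA : a₂.toList = a₁.toList := by simpa using hp1
        rw [hsv] at hs2
        rcases id h₂ with ⟨hq₂, hr₂⟩ | ⟨j₂, j₂', hj₂, hj₂', hprec₂, hq₂, hr₂⟩
        · exfalso
          have hU₂ : u₂.toList = [true, true] := by rw [hq₂, tl_xx]
          rw [hU₂] at hs2
          obtain ⟨k, rfl⟩ : ∃ k, j = k + 1 := ⟨j - 1, by omega⟩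
          simp [Lw, List.replicate_succ] at hs2
        · -- same rule : v = w
          have hU₂ : u₂.toList = Lw j₂ j₂' := by rw [hq₂, tl_L]
          have hV₂ : v₂.toList = Rw j₂ := by rw [hr₂, tl_R]
          rw [hU₂] at hs2
          have hs2' : replicate j₂ false ++ true :: (replicate j₂' false ++ true :: b₂.toList)
              = replicate j false ++ true :: (replicate j' false ++ true :: b₁.toList) := by
            simpa [Lw, List.append_assoc] using hs2
          obtain ⟨hjj, hrest⟩ := rep_match _ _ _ _ hs2'
          obtain ⟨hjj', hB⟩ := rep_match _ _ _ _ hrest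
          have hvw : w = v := eq_of_toList (by
            rw [hvl, hwl, hA, hV₁, hV₂, hjj, hB])
          exact ⟨v, Relation.ReflTransGen.refl, hvw ▸ Relation.ReflTransGen.refl⟩
      · -- overlap in the middle x : s = Rw j'
        have hA : a₂.toList = a₁.toList ++ true :: replicate j false := by
          rw [hp1, hpv]
        rw [hsv] at hs2
        rcases id h₂ with ⟨hq₂, hr₂⟩ | ⟨j₂, j₂', hj₂, hj₂', hprec₂, hq₂, hr₂⟩
        · exfalso
          have hU₂ : u₂.toList = [true, true] := by rw [hq₂, tl_xx]
          rw [hU₂] at hs2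
          obtain ⟨k, rfl⟩ : ∃ k, j' = k + 1 := ⟨j' - 1, by omega⟩
          simp [Rw, List.replicate_succ] at hs2
        · -- s-rule inside s-rule sharing middle x
          have hU₂ : u₂.toList = Lw j₂ j₂' := by rw [hq₂, tl_L]
          have hV₂ : v₂.toList = Rw j₂ := by rw [hr₂, tl_R]
          rw [hU₂] at hs2
          have hs2' : replicate j₂ false ++ true :: (replicate j₂' false ++ true :: b₂.toList)
              = replicate j' false ++ true :: b₁.toList := by
            simpa [Lw, Rw, List.append_assoc] using hs2
          obtain ⟨hjj, hB⟩ := rep_match _ _ _ _ hs2'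
          have hprec' : mPrec m j₂' j := prec_trans (hjj ▸ hprec₂) hprec
          refine ⟨FreeMonoid.ofList (a₁.toList ++ Rw j ++ b₂.toList),
            Relation.ReflTransGen.single ?_, Relation.ReflTransGen.single ?_⟩
          · exact step_gen (rel_s m j j₂' hj hj₂' hprec') a₁.toList b₂.toList
              (by rw [hvl, hV₁, ← hB, tl_L]; simp [Lw, Rw, List.append_assoc])
              (by rw [tl_R]; simp [tl_of, List.append_assoc])
          · exact step_gen h₁ a₁.toList b₂.toList
              (by rw [hwl, hA, hV₂, hU₁, hjj]; simp [Lw, Rw, List.append_assoc])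
              (by rw [hV₁]; simp [tl_of, List.append_assoc])
      · -- overlap in the final x : s = [true]
        have hA : a₂.toList = a₁.toList ++ true :: (replicate j false ++ true :: replicate j' false) := by
          rw [hp1, hpv]
        rw [hsv] at hs2
        rcases id h₂ with ⟨hq₂, hr₂⟩ | ⟨j₂, j₂', hj₂, hj₂', hprec₂, hq₂, hr₂⟩
        · -- s-rule then xx sharing the final x
          have hU₂ : u₂.toList = [true, true] := by rw [hq₂, tl_xx]
          have hV₂ : v₂.toList = [true] := by rw [hr₂, tl_x]
          rw [hU₂] at hs2
          have hB : b₁.toList = true :: b₂.toList := by simpa using hs2.symm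
          refine ⟨FreeMonoid.ofList (a₁.toList ++ Rw j ++ b₂.toList),
            Relation.ReflTransGen.single ?_, Relation.ReflTransGen.single ?_⟩
          · exact step_gen (rel_xx m) (a₁.toList ++ true :: replicate j false) b₂.toList
              (by rw [hvl, hV₁, hB, tl_xx]; simp [Rw, List.append_assoc])
              (by simp [tl_of, tl_x, Rw, List.append_assoc])
          · exact step_gen h₁ a₁.toList b₂.toList
              (by rw [hwl, hA, hV₂, hU₁]; simp [Lw, List.append_assoc])
              (by rw [hV₁]; simp [tl_of, List.append_assoc])
        · -- two s-rules sharing one x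
          have hU₂ : u₂.toList = Lw j₂ j₂' := by rw [hq₂, tl_L]
          have hV₂ : v₂.toList = Rw j₂ := by rw [hr₂, tl_R]
          rw [hU₂] at hs2
          have hB : b₁.toList =
              replicate j₂ false ++ true :: (replicate j₂' false ++ true :: b₂.toList) := by
            simpa [Lw, List.append_assoc] using hs2.symm
          refine ⟨FreeMonoid.ofList (a₁.toList ++ true :: replicate j false ++ Rw j₂ ++ b₂.toList),
            Relation.ReflTransGen.single ?_, Relation.ReflTransGen.single ?_⟩
          · exact step_gen h₂ (a₁.toList ++ true :: replicate j false) b₂.toList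
              (by rw [hvl, hV₁, hB, hU₂]; simp [Lw, Rw, List.append_assoc])
              (by rw [hV₂]; simp [tl_of, Rw, List.append_assoc])
          · exact step_gen h₁ a₁.toList (replicate j₂ false ++ true :: b₂.toList)
              (by rw [hwl, hA, hV₂, hU₁]; simp [Lw, Rw, List.append_assoc])
              (by rw [hV₁]; simp [tl_of, Rw, List.append_assoc])

end S11

/-- All ambiguities of the rewriting system `xx → x`,
`x yʲ x y^{j'} x → x yʲ x` (for `j' ≺ j`) are resolvable: any two one-step
reductions of a word can be further reduced to a common word. -/
theorem stmt11 (m : ℕ → ℕ) (hm1 : m 1 = 1) (hmono : ∀ k, 1 ≤ k → m k < m (k + 1))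
    (u v w : FreeMonoid Bool) (hv : smRed m u v) (hw : smRed m u w) :
    ∃ z : FreeMonoid Bool,
      Relation.ReflTransGen (smRed m) v z ∧ Relation.ReflTransGen (smRed m) w z := by
  obtain ⟨a₁, b₁, u₁, v₁, h₁, hu₁, hv⟩ := hv
  obtain ⟨a₂, b₂, u₂, v₂, h₂, hu₂, hw⟩ := hw
  by_cases hle : a₁.toList.length ≤ a₂.toList.length
  · exact S11.main m u v w a₁ b₁ u₁ v₁ a₂ b₂ u₂ v₂ h₁ h₂ hu₁ hu₂ hv hw hle
  · obtain ⟨z, h1, h2⟩ :=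
      S11.main m u w v a₂ b₂ u₂ v₂ a₁ b₁ u₁ v₁ h₂ h₁ hu₂ hu₁ hw hv (by omega)
    exact ⟨z, h2, h1⟩
end

section
/- Let a be an element of the semigroup S_m with normal form a = y^{j_0} x y^{j_1} x ⋯ y^{j_{t−1}} x y^{j_t}. Then the word length of a with respect to the generating set {x, y} equals t + j_0 + j_1 + ⋯ + j_t. -/
/-- Word length in `S_m` with respect to the generating set `{x, y}`. -/
noncomputable def smLen (m : ℕ → ℕ) (a : SM m) : ℕ :=
  sInf {k : ℕ | ∃ w : FreeMonoid Bool, w.length = k ∧ (conGen (smRel m)).mk' w = a}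

/- ### auxiliary development -/

open scoped Classical

/-- push an `x` onto a reversed state list. -/
noncomputable def pushx (m : ℕ → ℕ) : List ℕ → List ℕ
  | [] => [0]
  | [j] => [0, j]
  | 0 :: d :: rest => 0 :: d :: rest
  | (j+1) :: d :: [] => [0, j+1, d]
  | (j+1) :: d :: e :: rest =>
      if mPrec m (j+1) d then 0 :: d :: e :: rest else 0 :: (j+1) :: d :: e :: rest

def pushy : List ℕ → List ℕ
  | [] => [1]
  | j :: rest => (j+1) :: rest

noncomputable def push (m : ℕ → ℕ) (L : List ℕ) (b : Bool) : List ℕ :=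
  if b then pushx m L else pushy L

noncomputable def run (m : ℕ → ℕ) (L : List ℕ) (w : FreeMonoid Bool) : List ℕ :=
  List.foldl (push m) L w.toList

lemma run_mul (m : ℕ → ℕ) (L : List ℕ) (u v : FreeMonoid Bool) :
    run m L (u * v) = run m (run m L u) v := by
  simp [run, FreeMonoid.toList_mul, List.foldl_append]

lemma run_x (m : ℕ → ℕ) (L : List ℕ) : run m L fmx = pushx m L := by
  simp [run, fmx, FreeMonoid.toList_of, push]

lemma toList_fmy_pow (j : ℕ) : (fmy ^ j).toList = List.replicate j false := by
  induction j with
  | zero => rfl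
  | succ n ih =>
      rw [pow_succ, FreeMonoid.toList_mul, ih]
      simp [fmy, FreeMonoid.toList_of, List.replicate_succ']

lemma run_ypow (m : ℕ → ℕ) (j a : ℕ) (T : List ℕ) :
    run m (a :: T) (fmy ^ j) = (a + j) :: T := by
  induction j generalizing a with
  | zero => simp [run]
  | succ n ih =>
      rw [pow_succ, run_mul, ih]
      simp only [run, fmy, FreeMonoid.toList_of, List.foldl_cons, List.foldl_nil, push,
        if_neg (by simp : ¬ (false : Bool) = true)]
      simp [pushy]
      omega

lemma pushx_one (m : ℕ → ℕ) (j : ℕ) : pushx m [j] = [0, j] := by simp [pushx]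

lemma pushx_zero (m : ℕ → ℕ) (d : ℕ) (T : List ℕ) :
    pushx m (0 :: d :: T) = 0 :: d :: T := rfl

lemma pushx_two (m : ℕ → ℕ) (j d : ℕ) : pushx m [j+1, d] = [0, j+1, d] := rfl

lemma pushx_pos (m : ℕ → ℕ) (j d e : ℕ) (T : List ℕ) :
    pushx m ((j+1) :: d :: e :: T) =
      if mPrec m (j+1) d then 0 :: d :: e :: T else 0 :: (j+1) :: d :: e :: T := rfl

lemma pushx_shape (m : ℕ → ℕ) (L : List ℕ) (hL : L ≠ []) :
    ∃ d T, pushx m L = 0 :: d :: T := by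
  match L with
  | [j] => exact ⟨j, [], pushx_one m j⟩
  | 0 :: d :: rest => exact ⟨d, rest, rfl⟩
  | (j+1) :: d :: [] => exact ⟨j+1, [d], rfl⟩
  | (j+1) :: d :: e :: rest =>
      by_cases h : mPrec m (j+1) d
      · exact ⟨d, e :: rest, by rw [pushx_pos, if_pos h]⟩
      · exact ⟨j+1, d :: e :: rest, by rw [pushx_pos, if_neg h]⟩

lemma push_ne_nil (m : ℕ → ℕ) (L : List ℕ) (b : Bool) : push m L b ≠ [] := by
  cases b
  · show pushy L ≠ []
    match L with
    | [] => simp [pushy]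
    | j :: rest => simp [pushy]
  · show pushx m L ≠ []
    match L with
    | [] => simp [pushx]
    | [j] => simp [pushx]
    | 0 :: d :: rest => simp [pushx]
    | (j+1) :: d :: [] => simp [pushx]
    | (j+1) :: d :: e :: rest =>
        rw [pushx_pos]; by_cases h : mPrec m (j+1) d <;> simp [h]

lemma foldl_ne_nil (m : ℕ → ℕ) (lb : List Bool) (L : List ℕ) (hL : L ≠ []) :
    List.foldl (push m) L lb ≠ [] := by
  induction lb generalizing L with
  | nil => exact hL
  | cons b t ih => exact ih _ (push_ne_nil m L b)

lemma run_ne_nil (m : ℕ → ℕ) (L : List ℕ) (w : FreeMonoid Bool) (hL : L ≠ []) :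
    run m L w ≠ [] := foldl_ne_nil m _ L hL

lemma mPrec_trans {m : ℕ → ℕ} {a b c : ℕ} (h1 : mPrec m a b) (h2 : mPrec m b c) :
    mPrec m a c := by
  obtain ⟨k, hk, h1a, h1b⟩ := h1
  obtain ⟨k', hk', h2a, h2b⟩ := h2
  exact ⟨k', hk', by omega, h2b⟩

lemma m_mono (m : ℕ → ℕ) (hmono : ∀ k, 1 ≤ k → m k < m (k + 1)) :
    ∀ p q, 1 ≤ p → p < q → m p < m q := by
  intro p q hp h
  induction q with
  | zero => omega
  | succ n ih =>
      rcases Nat.lt_or_ge p n with h' | h'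
      · exact (ih h').trans (hmono n (by omega))
      · have hpn : p = n := by omega
        subst hpn; exact hmono p hp

lemma not_mPrec_of_mPreceq {m : ℕ → ℕ} (hmono : ∀ k, 1 ≤ k → m k < m (k + 1))
    {a b : ℕ} (h : mPreceq m a b) : ¬ mPrec m b a := by
  rintro ⟨k', hk', h1, h2⟩
  rcases h with ⟨k, hk, ha, hb⟩ | ⟨k, hk, hb', ha', hbk, hak⟩
  · omega
  · -- m k ≤ b < m k'  and  m k' ≤ a < m (k+1)
    rcases lt_trichotomy k' k with hc | hc | hc
    · have := m_mono m hmono k' k hk' hc; omega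
    · subst hc; omega
    · have hk1 : k + 1 ≤ k' := by omega
      rcases Nat.lt_or_ge (k+1) k' with hc2 | hc2
      · have := m_mono m hmono (k+1) k' (by omega) hc2; omega
      · have : k + 1 = k' := by omega
        subst this; omega

/- ### the congruence -/

noncomputable def runCon (m : ℕ → ℕ) : Con (FreeMonoid Bool) where
  r u v := ∀ L : List ℕ, L ≠ [] → run m L u = run m L v
  iseqv := ⟨fun _ _ _ => rfl, fun h L hL => (h L hL).symm,
            fun h1 h2 L hL => (h1 L hL).trans (h2 L hL)⟩
  mul' := by
    intro w x y z h1 h2 L hL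
    rw [run_mul, run_mul, h1 L hL, h2 _ (run_ne_nil m L x hL)]

lemma smRel_le_runCon (m : ℕ → ℕ) : ∀ u v, smRel m u v → runCon m u v := by
  rintro u v (⟨hu, hv⟩ | ⟨j, j', hj, hj', hprec, hu, hv⟩) <;> subst hu hv <;> intro L hL
  · show run m L (fmx * fmx) = run m L fmx
    rw [run_mul]
    obtain ⟨d, T, hs⟩ := pushx_shape m L hL
    rw [run_x, run_x, hs, pushx_zero]
  · show run m L (fmx * fmy ^ j * fmx * fmy ^ j' * fmx) = run m L (fmx * fmy ^ j * fmx)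
    obtain ⟨j0, rfl⟩ : ∃ j0, j = j0 + 1 := ⟨j - 1, by omega⟩
    obtain ⟨j0', rfl⟩ : ∃ j0', j' = j0' + 1 := ⟨j' - 1, by omega⟩
    obtain ⟨d, T, hs⟩ := pushx_shape m L hL
    simp only [run_mul, run_x, hs, run_ypow, Nat.zero_add]
    match T with
    | [] =>
        rw [pushx_two, run_ypow, Nat.zero_add, pushx_pos, if_pos hprec]
    | e :: T' =>
        by_cases hpd : mPrec m (j0+1) d
        · rw [pushx_pos, if_pos hpd, run_ypow, Nat.zero_add, pushx_pos,
            if_pos (mPrec_trans hprec hpd)]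
        · rw [pushx_pos, if_neg hpd, run_ypow, Nat.zero_add, pushx_pos, if_pos hprec]

lemma run_eq_of_con (m : ℕ → ℕ) {u v : FreeMonoid Bool}
    (h : conGen (smRel m) u v) : run m [0] u = run m [0] v :=
  (Con.conGen_le.mpr (smRel_le_runCon m) : conGen (smRel m) ≤ runCon m) h [0] (by simp)

/- ### running the normal form word -/

lemma runA (m : ℕ → ℕ) (hmono : ∀ k, 1 ≤ k → m k < m (k + 1)) :
    ∀ (r : List ℕ) (a d : ℕ) (S : List ℕ), r ≠ [] → 1 ≤ a →
    (S = [] ∨ ¬ mPrec m a d) →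
    (∀ j ∈ r.dropLast, 1 ≤ j) →
    List.Chain' (mPreceq m) (a :: r.dropLast) →
    run m (a :: d :: S) (fmx * nfWord r) = r.reverse ++ (a :: d :: S) := by
  intro r
  induction r with
  | nil => intro a d S h; exact absurd rfl h
  | cons j r' ih =>
      intro a d S _ ha hS hint hch
      obtain ⟨a0, rfl⟩ : ∃ a0, a = a0 + 1 := ⟨a - 1, by omega⟩
      have hx : pushx m ((a0+1) :: d :: S) = 0 :: (a0+1) :: d :: S := by
        rcases hS with rfl | hS
        · exact pushx_two m a0 d
        · match S with
          | [] => exact pushx_two m a0 d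
          | e :: S' => rw [pushx_pos, if_neg hS]
      match r' with
      | [] =>
          show run m _ (fmx * fmy ^ j) = _
          rw [run_mul, run_x, hx, run_ypow, Nat.zero_add]
          simp
      | j1 :: r'' =>
          have hnf : fmx * nfWord (j :: j1 :: r'') =
              (fmx * fmy ^ j) * (fmx * nfWord (j1 :: r'')) := by
            show fmx * (fmy ^ j * fmx * nfWord (j1 :: r'')) = _
            simp [mul_assoc]
          have hin : run m ((a0+1) :: d :: S) (fmx * fmy ^ j) = j :: (a0+1) :: d :: S := by
            rw [run_mul, run_x, hx, run_ypow, Nat.zero_add]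
          rw [hnf, run_mul, hin]
          have hdl : (j :: j1 :: r'').dropLast = j :: (j1 :: r'').dropLast := rfl
          rw [hdl] at hint hch
          have hj1 : 1 ≤ j := hint j (by simp)
          unfold List.Chain' at hch; rw [List.isChain_cons_cons] at hch
          have hnp : ¬ mPrec m j (a0+1) := not_mPrec_of_mPreceq hmono hch.1
          rw [ih j (a0+1) (d :: S) (by simp) hj1 (Or.inr hnp)
            (fun x hxx => hint x (List.mem_cons_of_mem _ hxx)) hch.2]
          simp

lemma run_nfWord (m : ℕ → ℕ) (hmono : ∀ k, 1 ≤ k → m k < m (k + 1))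
    (l : List ℕ) (hl : isNF m l) : run m [0] (nfWord l) = l.reverse := by
  obtain ⟨hne, hint, hch⟩ := hl
  match l with
  | [j0] =>
      show run m [0] (fmy ^ j0) = [j0]
      rw [run_ypow, Nat.zero_add]
  | [j0, j1] =>
      show run m [0] (fmy ^ j0 * fmx * fmy ^ j1) = [j1, j0]
      rw [run_mul, run_mul, run_x, run_ypow, Nat.zero_add, pushx_one, run_ypow, Nat.zero_add]
  | j0 :: j1 :: j2 :: r =>
      have hsp : nfWord (j0 :: j1 :: j2 :: r)
          = (fmy ^ j0 * fmx) * (fmy ^ j1 * (fmx * nfWord (j2 :: r))) := by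
        show fmy ^ j0 * fmx * (fmy ^ j1 * fmx * nfWord (j2 :: r)) = _
        simp [mul_assoc]
      have e1 : run m [0] (fmy ^ j0 * fmx) = [0, j0] := by
        rw [run_mul, run_ypow, Nat.zero_add, run_x, pushx_one]
      have e2 : run m [0, j0] (fmy ^ j1) = [j1, j0] := by
        rw [run_ypow, Nat.zero_add]
      have hdl : (j0 :: j1 :: j2 :: r).tail.dropLast = j1 :: (j2 :: r).dropLast := rfl
      rw [hdl] at hint hch
      have e3 : run m [j1, j0] (fmx * nfWord (j2 :: r)) = (j2 :: r).reverse ++ [j1, j0] :=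
        runA m hmono (j2 :: r) j1 j0 [] (by simp) (hint j1 (by simp)) (Or.inl rfl)
          (fun x hxx => hint x (List.mem_cons_of_mem _ hxx)) hch
      rw [hsp, run_mul, run_mul, e1, e2, e3]
      simp

/- ### weights and lengths -/

lemma push_wt (m : ℕ → ℕ) (L : List ℕ) (b : Bool) (hL : L ≠ []) :
    (push m L b).length + (push m L b).sum ≤ L.length + L.sum + 1 := by
  cases b
  · have h : push m L false = pushy L := rfl
    rw [h]
    match L with
    | [] => exact absurd rfl hL
    | j :: rest => simp [pushy]; omega
  · have h : push m L true = pushx m L := rfl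
    rw [h]
    match L with
    | [] => exact absurd rfl hL
    | [j] => rw [pushx_one]; simp; omega
    | 0 :: d :: T => rw [pushx_zero]; omega
    | (j+1) :: d :: [] => rw [pushx_two]; simp; omega
    | (j+1) :: d :: e :: T =>
        rw [pushx_pos]
        split <;> simp <;> omega

lemma foldl_wt (m : ℕ → ℕ) : ∀ (lb : List Bool) (L : List ℕ), L ≠ [] →
    (List.foldl (push m) L lb).length + (List.foldl (push m) L lb).sum
      ≤ L.length + L.sum + lb.length := by
  intro lb
  induction lb with
  | nil => intro L _; simp
  | cons b t ih =>
      intro L hL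
      have h1 := ih (push m L b) (push_ne_nil m L b)
      have h2 := push_wt m L b hL
      simp only [List.foldl_cons, List.length_cons] at *
      omega

lemma length_fmy_pow (j : ℕ) : (fmy ^ j).length = j := by
  rw [show (fmy ^ j).length = (fmy ^ j).toList.length from rfl, toList_fmy_pow,
    List.length_replicate]

lemma nfWord_length : ∀ (l : List ℕ), l ≠ [] → (nfWord l).length = (l.length - 1) + l.sum := by
  intro l
  induction l with
  | nil => intro h; exact absurd rfl h
  | cons j r ih =>
      intro _
      cases r with
      | nil =>
          show (fmy ^ j).length = _
          rw [length_fmy_pow]; simp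
      | cons j1 r' =>
          have hihs := ih (by simp)
          show (fmy ^ j * fmx * nfWord (j1 :: r')).length = _
          rw [FreeMonoid.length_mul, FreeMonoid.length_mul, hihs, length_fmy_pow]
          have : fmx.length = 1 := rfl
          rw [this]
          simp only [List.length_cons, List.sum_cons]
          omega

/-- If `a ∈ S_m` has normal form `y^{j₀} x y^{j₁} x ⋯ y^{j_{t-1}} x y^{j_t}`,
then `|a| = t + j₀ + j₁ + ⋯ + j_t`. -/
theorem stmt12 (m : ℕ → ℕ) (hm1 : m 1 = 1) (hmono : ∀ k, 1 ≤ k → m k < m (k + 1))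
    (l : List ℕ) (hl : isNF m l) :
    smLen m ((conGen (smRel m)).mk' (nfWord l)) = (l.length - 1) + l.sum := by
  have hne := hl.1
  have hlp : 1 ≤ l.length := List.length_pos_iff.mpr hne
  have hrun := run_nfWord m hmono l hl
  have hnl := nfWord_length l hne
  apply le_antisymm
  · exact Nat.sInf_le ⟨nfWord l, hnl, rfl⟩
  · refine le_csInf ⟨_, nfWord l, hnl, rfl⟩ ?_
    rintro k ⟨w, rfl, hwmk⟩
    have hcon : conGen (smRel m) w (nfWord l) := (Con.eq _).mp hwmk
    have hrw : run m [0] w = l.reverse := (run_eq_of_con m hcon).trans hrun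
    have hwt := foldl_wt m w.toList [0] (by simp)
    rw [show List.foldl (push m) [0] w.toList = run m [0] w from rfl, hrw] at hwt
    simp only [List.length_reverse, List.sum_reverse, List.length_cons, List.length_nil,
      List.sum_cons, List.sum_nil] at hwt
    have hwl : w.length = w.toList.length := rfl
    omega
end
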